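/- arXiv:0905.2639 — 4 statements merged into one kernel-verified Lean document; each statement's English description precedes it below -/
import Mathlib

section
/- Let p ≥ 2 and d ≥ 1 be integers with d ≤ (p−1)/2. Then the number |G_{p,d}| of undirected graphs on p labeled vertices with maximum vertex degree at most d satisfies (⌊p/(d+1)⌋!)^{d(d+1)/2} ≤ |G_{p,d}| ≤ (pd/2) · C(C(p,2), ⌊pd/2⌋), where C(N, ℓ) denotes the binomial coefficient. -/
open scoped Classical BigOperators
open Real

noncomputable section

/-- Sign of a Boolean spin: `true ↦ 1`, `false ↦ -1`. -/
def sgn (b : Bool) : ℝ := if b then 1 else -1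

/-- Ising energy `Σ_{s<t} θ_{st} x_s x_t`. -/
def energy {p : ℕ} (θ : Fin p → Fin p → ℝ) (x : Fin p → Bool) : ℝ :=
  ∑ s : Fin p, ∑ t : Fin p, if s < t then θ s t * sgn (x s) * sgn (x t) else 0

/-- Partition function `Z(θ)`. -/
def Zpart {p : ℕ} (θ : Fin p → Fin p → ℝ) : ℝ :=
  ∑ x : Fin p → Bool, Real.exp (energy θ x)

/-- Ising probability mass function `P_θ`. -/
def isingP {p : ℕ} (θ : Fin p → Fin p → ℝ) (x : Fin p → Bool) : ℝ :=
  Real.exp (energy θ x) / Zpart θ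

/-- Probability of an event under `n` i.i.d. samples from `P_θ`. -/
def probn {p : ℕ} (n : ℕ) (θ : Fin p → Fin p → ℝ)
    (A : (Fin n → Fin p → Bool) → Prop) : ℝ :=
  ∑ xs : Fin n → Fin p → Bool, if A xs then ∏ i, isingP θ (xs i) else 0

/-- Probability of a single-sample event under `P_θ`. -/
def prob1 {p : ℕ} (θ : Fin p → Fin p → ℝ) (A : (Fin p → Bool) → Prop) : ℝ :=
  ∑ x : Fin p → Bool, if A x then isingP θ x else 0

/-- A parameter vector: symmetric array vanishing on the diagonal. -/
def IsSymParam {p : ℕ} (θ : Fin p → Fin p → ℝ) : Prop :=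
  (∀ s t, θ s t = θ t s) ∧ (∀ s, θ s s = 0)

/-- The class `Θ_{λ,ω}(G)` of admissible parameter vectors for graph `G`. -/
def ParamClass {p : ℕ} (G : SimpleGraph (Fin p)) (lam om : ℝ)
    (θ : Fin p → Fin p → ℝ) : Prop :=
  IsSymParam θ ∧ (∀ s t : Fin p, ¬ G.Adj s t → θ s t = 0) ∧
    (∀ s t : Fin p, G.Adj s t → lam ≤ |θ s t|) ∧
    (∀ s : Fin p, (∑ t : Fin p, |θ s t|) ≤ om)

/-- The class `G_{p,d}` of graphs with maximum degree at most `d`. -/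
def degClass (p d : ℕ) : Set (SimpleGraph (Fin p)) :=
  {G | ∀ v : Fin p, ({u | G.Adj v u}).ncard ≤ d}

/-- The class `G_{p,k}` of graphs with at most `k` edges. -/
def edgeClass (p k : ℕ) : Set (SimpleGraph (Fin p)) :=
  {G | G.edgeSet.ncard ≤ k}

/-- Kullback–Leibler divergence `D(θ‖θ')` between Ising models. -/
def KLdiv {p : ℕ} (θ θ' : Fin p → Fin p → ℝ) : ℝ :=
  ∑ x : Fin p → Bool, isingP θ x * Real.log (isingP θ x / isingP θ' x)

/-- Symmetrized KL divergence `S(θ‖θ')`. -/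
def symKL {p : ℕ} (θ θ' : Fin p → Fin p → ℝ) : ℝ := KLdiv θ θ' + KLdiv θ' θ

/-- The divergence `J(θ‖θ') = D((θ+θ')/2‖θ) + D((θ+θ')/2‖θ')`. -/
def Jdiv {p : ℕ} (θ θ' : Fin p → Fin p → ℝ) : ℝ :=
  KLdiv (fun s t => (θ s t + θ' s t) / 2) θ +
    KLdiv (fun s t => (θ s t + θ' s t) / 2) θ'

/-- Mean parameter `μ_{st}(θ) = E_θ[X_s X_t]`. -/
def meanPar {p : ℕ} (θ : Fin p → Fin p → ℝ) (s t : Fin p) : ℝ :=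
  ∑ x : Fin p → Bool, isingP θ x * (sgn (x s) * sgn (x t))

section CDCaux
lemma CDC_mono_choose {N k l : ℕ} (hkl : k ≤ l) (hl : 2 * l ≤ N) :
    N.choose k ≤ N.choose l := by
  induction l with
  | zero => simp_all
  | succ l ih =>
    rcases Nat.lt_or_ge k (l+1) with h | h
    · have hlh : l < N / 2 := by
        have : l + 1 ≤ N / 2 := (Nat.le_div_iff_mul_le two_pos).mpr (by omega)
        omega
      exact le_trans (ih (by omega) (by omega)) (Nat.choose_le_succ_of_lt_half_left hlh)
    · have : k = l + 1 := by omega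
      simp [this]

lemma CDC_sum_bound (p d : ℕ) (hp : 2 ≤ p) (hd : 1 ≤ d) (hdp : 2*d ≤ p - 1) :
    ((∑ k ∈ Finset.range (p*d/2+1), ((p.choose 2).choose k) : ℕ) : ℝ)
      ≤ (p:ℝ)*(d:ℝ)/2 * ((p.choose 2).choose (p*d/2) : ℝ) := by
  set N := p.choose 2 with hN
  set m := p*d/2 with hm
  have hNval : 2 * N = p * (p-1) := by
    rw [hN, Nat.choose_two_right]
    have hev : 2 ∣ p * (p-1) := by
      rcases Nat.even_or_odd p with h | h
      · exact Dvd.dvd.mul_right h.two_dvd _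
      · exact Dvd.dvd.mul_left (Nat.Odd.sub_odd h odd_one).two_dvd _
    omega
  have hpdN : p * d ≤ N := by
    have : p * (2*d) ≤ p * (p-1) := Nat.mul_le_mul_left p hdp
    nlinarith [hNval]
  rcases Nat.lt_or_ge m 2 with hm2 | hm2
  · -- m ≤ 1 forces p = 3, d = 1
    have hple : p ≤ p * d := Nat.le_mul_of_pos_right p hd
    have hp3 : 2*d + 1 ≤ p := by omega
    have hpd3 : p * d ≤ 3 := by omega
    have hd1 : d = 1 := by nlinarith
    have hp3' : p = 3 := by omega
    subst hd1 hp3'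
    have hN3 : N = 3 := by simp [hN]
    have hm1 : m = 1 := by simp [hm]
    rw [hN3, hm1]
    norm_num [Finset.sum_range_succ]
  · -- main case
    have h2mN : 2 * m ≤ N := by omega
    have hp4 : 4 ≤ p := by
      by_contra h
      have hp3 : p = 3 := by omega
      have hd1 : d = 1 := by omega
      have hpd : p * d = 3 := by rw [hp3, hd1]
      omega
    have hN6 : 6 ≤ N := by
      have : 4 * 3 ≤ p * (p - 1) := Nat.mul_le_mul (by omega) (by omega)
      omega
    have hNC : N + 1 ≤ N.choose m := by
      have h1 : N.choose 2 ≤ N.choose m := CDC_mono_choose hm2 h2mN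
      have h2 : N + 1 ≤ N.choose 2 := by
        rw [Nat.choose_two_right]
        rw [Nat.le_div_iff_mul_le two_pos]
        obtain ⟨c, hc⟩ := Nat.exists_eq_add_of_le hN6
        rw [hc, show 6 + c - 1 = 5 + c by omega]
        nlinarith
      omega
    have hsplit : m + 1 = 2 + (m - 1) := by omega
    have hS : (∑ k ∈ Finset.range (m+1), N.choose k) ≤ m * N.choose m := by
      rw [hsplit, Finset.sum_range_add]
      have hA : ∑ i ∈ Finset.range 2, N.choose i = 1 + N := by
        simp [Finset.sum_range_succ]
      have hB : ∑ i ∈ Finset.range (m-1), N.choose (2+i) ≤ (m-1) * N.choose m := by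
        calc ∑ i ∈ Finset.range (m-1), N.choose (2+i)
            ≤ ∑ _i ∈ Finset.range (m-1), N.choose m := by
              refine Finset.sum_le_sum fun i hi => ?_
              exact CDC_mono_choose (by simp at hi; omega) h2mN
          _ = (m-1) * N.choose m := by simp [mul_comm]
      have : (m-1) * N.choose m + N.choose m = m * N.choose m := by
        have : (m - 1 + 1) = m := by omega
        nlinarith [this]
      omega
    have hcast : ((m:ℝ)) ≤ (p:ℝ)*(d:ℝ)/2 := by
      have h2 : (2:ℕ) * m ≤ p * d := by omega
      have := (Nat.cast_le (α := ℝ)).mpr h2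
      push_cast at this
      linarith
    calc ((∑ k ∈ Finset.range (m+1), N.choose k : ℕ) : ℝ)
        ≤ ((m * N.choose m : ℕ) : ℝ) := by exact_mod_cast hS
      _ = (m:ℝ) * (N.choose m : ℝ) := by push_cast; ring
      _ ≤ (p:ℝ)*(d:ℝ)/2 * (N.choose m : ℝ) := by
          exact mul_le_mul_of_nonneg_right hcast (by positivity)
-- counting subsets of card ≤ m
lemma card_powerset_filter_le {α : Type*} [DecidableEq α] (U : Finset α) (m : ℕ) :
    (U.powerset.filter (fun s => s.card ≤ m)).card
      = ∑ k ∈ Finset.range (m+1), U.card.choose k := by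
  have h : U.powerset.filter (fun s => s.card ≤ m)
      = (Finset.range (m+1)).biUnion (fun k => Finset.powersetCard k U) := by
    ext s
    simp [Finset.mem_powersetCard, Finset.mem_powerset, Nat.lt_succ_iff]
    tauto
  rw [h, Finset.card_biUnion]
  · simp [Finset.card_powersetCard]
  · intro i _ j _ hij
    simp only [Finset.disjoint_left, Finset.mem_powersetCard]
    rintro s ⟨_, rfl⟩ ⟨_, h2⟩
    exact hij (h2 ▸ rfl)


lemma deg_eq {p : ℕ} (G : SimpleGraph (Fin p)) (v : Fin p) :
    ({u | G.Adj v u}).ncard = G.degree v := by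
  rw [← SimpleGraph.card_neighborSet_eq_degree]
  rw [Set.ncard_eq_toFinset_card']
  simp only [Set.toFinset_setOf]
  rw [Fintype.card_subtype]
  rfl

lemma edge_card_le {p d : ℕ} (G : SimpleGraph (Fin p)) (hG : G ∈ degClass p d) :
    G.edgeFinset.card ≤ p * d / 2 := by
  rw [Nat.le_div_iff_mul_le two_pos]
  have h := G.sum_degrees_eq_twice_card_edges
  have h2 : ∑ v : Fin p, G.degree v ≤ p * d := by
    calc ∑ v : Fin p, G.degree v ≤ ∑ _v : Fin p, d :=
          Finset.sum_le_sum (fun v _ => by rw [← deg_eq]; exact hG v)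
      _ = p * d := by simp [Finset.card_univ, mul_comm]
  omega

lemma upper_nat (p d : ℕ) :
    (degClass p d).ncard ≤ ∑ k ∈ Finset.range (p*d/2+1), (p.choose 2).choose k := by
  classical
  have hU : (⊤ : SimpleGraph (Fin p)).edgeFinset.card = p.choose 2 := by
    simpa using SimpleGraph.card_edgeFinset_top_eq_card_choose_two (V := Fin p)
  rw [Set.ncard_eq_toFinset_card']
  have hinj : Set.InjOn (fun G : SimpleGraph (Fin p) => G.edgeFinset)
      ((degClass p d).toFinset : Set (SimpleGraph (Fin p))) := by
    intro a _ b _ hab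
    exact SimpleGraph.edgeFinset_inj.mp hab
  have := Finset.card_le_card_of_injOn (f := fun G : SimpleGraph (Fin p) => G.edgeFinset)
    (t := ((⊤ : SimpleGraph (Fin p)).edgeFinset.powerset.filter (fun s => s.card ≤ p*d/2)))
    ?_ hinj
  · rw [card_powerset_filter_le, hU] at this; exact this
  · intro G hG
    simp only [Finset.mem_coe, Finset.mem_filter, Finset.mem_powerset]
    constructor
    · exact SimpleGraph.edgeFinset_mono le_top
    · exact edge_card_le G (by simpa using hG)


variable {p q m0 : ℕ}

def iota (h : q * m0 ≤ p) : Fin q × Fin m0 → Fin p :=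
  Fin.castLE h ∘ finProdFinEquiv

lemma iota_inj (h : q * m0 ≤ p) : Function.Injective (iota h) := by
  unfold iota
  exact (Fin.castLE_injective h).comp (Equiv.injective _)

abbrev PairIdx (q : ℕ) := {pr : Fin q × Fin q // pr.1 < pr.2}

def lowerGraph (h : q * m0 ≤ p) (σ : PairIdx q → Equiv.Perm (Fin m0)) :
    SimpleGraph (Fin p) where
  Adj u v := ∃ (i j : Fin q) (k : Fin m0) (hij : i < j),
    (u = iota h (i, k) ∧ v = iota h (j, σ ⟨(i,j), hij⟩ k)) ∨
    (v = iota h (i, k) ∧ u = iota h (j, σ ⟨(i,j), hij⟩ k))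
  symm := by
    constructor
    rintro u v ⟨i, j, k, hij, hc⟩
    exact ⟨i, j, k, hij, hc.symm⟩
  loopless := by
    constructor
    rintro v ⟨i, j, k, hij, (⟨h1, h2⟩ | ⟨h1, h2⟩)⟩ <;>
    · rw [h1] at h2
      have := iota_inj h h2
      simp only [Prod.mk.injEq] at this
      exact absurd (this.1 ▸ hij) (lt_irrefl _)

def nbrF (h : q * m0 ≤ p) (σ : PairIdx q → Equiv.Perm (Fin m0)) (iv : Fin q) (kv : Fin m0)
    (j : Fin q) : Fin p :=
  if hij : iv < j then iota h (j, σ ⟨(iv, j), hij⟩ kv)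
  else if hji : j < iv then iota h (j, (σ ⟨(j, iv), hji⟩).symm kv)
  else iota h (iv, kv)

lemma lowerGraph_deg (h : q * m0 ≤ p) (σ : PairIdx q → Equiv.Perm (Fin m0)) (v : Fin p) :
    ({u | (lowerGraph h σ).Adj v u}).ncard ≤ q - 1 := by
  by_cases hv : ∃ ik : Fin q × Fin m0, iota h ik = v
  · obtain ⟨⟨iv, kv⟩, hvik⟩ := hv
    have hsub : {u | (lowerGraph h σ).Adj v u} ⊆ (nbrF h σ iv kv) '' {j | j ≠ iv} := by
      rintro u ⟨i, j, k, hij, (⟨h1, h2⟩ | ⟨h1, h2⟩)⟩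
      · have hik := iota_inj h (hvik.trans h1)
        simp only [Prod.mk.injEq] at hik
        obtain ⟨hi, hk⟩ := hik
        subst hi; subst hk
        refine ⟨j, by exact fun hji => absurd (hji ▸ hij) (lt_irrefl _), ?_⟩
        rw [nbrF, dif_pos hij]
        exact h2.symm
      · have hik := iota_inj h (hvik.trans h2)
        simp only [Prod.mk.injEq] at hik
        obtain ⟨hj, hsk⟩ := hik
        subst hj
        refine ⟨i, fun hii => absurd (hii ▸ hij) (lt_irrefl _), ?_⟩
        rw [nbrF, dif_neg (by exact fun hlt => absurd (lt_trans hij hlt) (lt_irrefl _)),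
          dif_pos hij]
        rw [h1]
        congr 1
        rw [Prod.mk.injEq]
        exact ⟨rfl, by rw [hsk, Equiv.symm_apply_apply]⟩
    calc ({u | (lowerGraph h σ).Adj v u}).ncard
        ≤ ((nbrF h σ iv kv) '' {j | j ≠ iv}).ncard := Set.ncard_le_ncard hsub (Set.toFinite _)
      _ ≤ ({j : Fin q | j ≠ iv}).ncard := Set.ncard_image_le (Set.toFinite _)
      _ ≤ q - 1 := by
          rw [Set.ncard_eq_toFinset_card']
          simp only [Set.toFinset_setOf]
          rw [Finset.filter_ne']
          rw [Finset.card_erase_of_mem (Finset.mem_univ _)]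
          simp
  · have hempty : {u | (lowerGraph h σ).Adj v u} = ∅ := by
      ext u
      simp only [Set.mem_setOf_eq, Set.mem_empty_iff_false, iff_false]
      rintro ⟨i, j, k, hij, (⟨h1, h2⟩ | ⟨h1, h2⟩)⟩
      · exact hv ⟨(i, k), h1.symm⟩
      · exact hv ⟨(j, σ ⟨(i,j), hij⟩ k), h2.symm⟩
    rw [hempty]
    simp

lemma lowerGraph_inj (h : q * m0 ≤ p) :
    Function.Injective (lowerGraph (p := p) h) := by
  intro σ τ hst
  funext pr
  apply Equiv.ext
  intro k
  have hadj : (lowerGraph h σ).Adj (iota h (pr.1.1, k)) (iota h (pr.1.2, σ pr k)) :=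
    ⟨pr.1.1, pr.1.2, k, pr.2, Or.inl ⟨rfl, rfl⟩⟩
  rw [hst] at hadj
  obtain ⟨i, j, k', hij, (⟨h1, h2⟩ | ⟨h1, h2⟩)⟩ := hadj
  · have h1' := iota_inj h h1
    have h2' := iota_inj h h2
    simp only [Prod.mk.injEq] at h1' h2'
    obtain ⟨hi, hk⟩ := h1'
    obtain ⟨hj, hk2⟩ := h2'
    subst hi; subst hj; subst hk
    rw [hk2]
  · have h1' := iota_inj h h1
    have h2' := iota_inj h h2
    simp only [Prod.mk.injEq] at h1' h2'
    exact absurd (h2'.1 ▸ h1'.1 ▸ hij) (by simp [pr.2, asymm pr.2])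

def pairEquiv (q : ℕ) : PairIdx q ≃ Σ j : Fin q, Fin (j : ℕ) where
  toFun x := ⟨x.1.2, ⟨x.1.1, x.2⟩⟩
  invFun x := ⟨(⟨x.2, lt_trans x.2.isLt x.1.isLt⟩, x.1), x.2.isLt⟩
  left_inv x := rfl
  right_inv x := rfl

lemma card_pairIdx (q : ℕ) : Fintype.card (PairIdx q) = q * (q - 1) / 2 := by
  rw [Fintype.card_congr (pairEquiv q)]
  rw [Fintype.card_sigma]
  simp only [Fintype.card_fin]
  rw [Fin.sum_univ_eq_sum_range (fun i => i) q, Finset.sum_range_id]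

lemma lower_bound (p d : ℕ) (hp : 2 ≤ p) (hd : 1 ≤ d) (hdp : 2 * d ≤ p - 1) :
    (Nat.factorial (p / (d + 1))) ^ (d * (d + 1) / 2) ≤ (degClass p d).ncard := by
  set q := d + 1 with hq
  set m0 := p / q with hm0
  have h : q * m0 ≤ p := by rw [mul_comm]; exact Nat.div_mul_le_self p q
  have hf : ∀ σ : PairIdx q → Equiv.Perm (Fin m0), lowerGraph h σ ∈ degClass p d := by
    intro σ v
    have h1 := lowerGraph_deg h σ v
    have h2 : q - 1 = d := by omega
    rw [h2] at h1
    exact h1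
  classical
  have finj : Function.Injective
      (fun σ : PairIdx q → Equiv.Perm (Fin m0) => (⟨lowerGraph h σ, hf σ⟩ : degClass p d)) :=
    fun a b hab => lowerGraph_inj h (Subtype.ext_iff.mp hab)
  have hcard := Fintype.card_le_of_injective _ finj
  rw [Fintype.card_fun, Fintype.card_perm, Fintype.card_fin, card_pairIdx] at hcard
  have hncard : (degClass p d).ncard = Fintype.card (degClass p d) := by
    rw [Set.ncard_eq_toFinset_card', Set.toFinset_card]
  rw [hncard]
  have hexp : q * (q - 1) / 2 = d * (d + 1) / 2 := by
    rw [hq, Nat.succ_sub_one, mul_comm]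
  rw [hexp] at hcard
  exact hcard

end CDCaux

/-- Lemma (cardinality of `G_{p,d}`): for `d ≤ (p-1)/2`, the number of graphs on `p`
labeled vertices with maximum degree at most `d` is between
`(⌊p/(d+1)⌋!)^{d(d+1)/2}` and `(pd/2)·C(C(p,2), ⌊pd/2⌋)`. -/

theorem card_deg_class (p d : ℕ) (hp : 2 ≤ p) (hd : 1 ≤ d) (hdp : 2 * d ≤ p - 1) :
    ((Nat.factorial (p / (d + 1)) : ℝ)) ^ (d * (d + 1) / 2) ≤
        ((degClass p d).ncard : ℝ) ∧
      ((degClass p d).ncard : ℝ) ≤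
        (p : ℝ) * (d : ℝ) / 2 * ((p.choose 2).choose (p * d / 2) : ℝ) := by
  constructor
  · have h1 := lower_bound p d hp hd hdp
    have h2 := (Nat.cast_le (α := ℝ)).mpr h1
    push_cast at h2
    exact h2
  · have h1 := upper_nat p d
    have h2 := (Nat.cast_le (α := ℝ)).mpr h1
    exact le_trans h2 (CDC_sum_bound p d hp hd hdp)
end
end

section
/- Let X be a finite set, let P_1, …, P_M (M ≥ 5) be probability distributions on X, each assigning positive probability to every point, and let n be a positive integer. If n < log(M/4) / ( (2/M²) Σ_{1 ≤ k < ℓ ≤ M} [D(P_k‖P_ℓ) + D(P_ℓ‖P_k)] ), then for every decoder φ : X^n → {1,…,M} there exists an index k ∈ {1,…,M} such that the probability, under n i.i.d. samples X_1,…,X_n from P_k, that φ(X_1,…,X_n) ≠ k is at least 1/2. -/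
open scoped Classical BigOperators
open Real

noncomputable section

section FanoHelpers
open Finset

private lemma log_le_aux {a c : ℝ} (ha : 0 < a) (hc : 0 < c) :
    Real.log a ≤ Real.log c + a / c - 1 := by
  have h := Real.log_le_sub_one_of_pos (x := a / c) (by positivity)
  rw [Real.log_div ha.ne' hc.ne'] at h
  linarith

private lemma mul_log_ge_aux {a c : ℝ} (ha : 0 ≤ a) (hc : 0 < c) :
    a - c ≤ a * Real.log (a / c) := by
  rcases eq_or_lt_of_le ha with h | h
  · rw [← h]; simp; linarith
  · have h1 := log_le_aux hc h
    rw [Real.log_div h.ne' hc.ne']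
    have h2 : 1 - c / a ≤ Real.log a - Real.log c := by linarith
    have := mul_le_mul_of_nonneg_left h2 h.le
    calc a - c = a * (1 - c / a) := by field_simp
    _ ≤ a * (Real.log a - Real.log c) := this

private lemma log_sum_ineq {ι : Type*} (s : Finset ι) (a b : ι → ℝ)
    (ha : ∀ i ∈ s, 0 < a i) (hb : ∀ i ∈ s, 0 < b i) :
    (∑ i ∈ s, a i) * Real.log ((∑ i ∈ s, a i) / (∑ i ∈ s, b i)) ≤
      ∑ i ∈ s, a i * Real.log (a i / b i) := by
  rcases s.eq_empty_or_nonempty with rfl | hs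
  · simp
  · set A := ∑ i ∈ s, a i with hA'
    set B := ∑ i ∈ s, b i with hB'
    have hA : 0 < A := Finset.sum_pos ha hs
    have hB : 0 < B := Finset.sum_pos hb hs
    have key : ∀ i ∈ s, a i * Real.log (A / B) + (a i - b i * (A / B)) ≤
        a i * Real.log (a i / b i) := by
      intro i hi
      have hai := ha i hi
      have hbi := hb i hi
      have hc : 0 < b i * (A / B) := by positivity
      have h1 := mul_log_ge_aux hai.le hc
      have h2 : Real.log (a i / (b i * (A / B))) =
          Real.log (a i / b i) - Real.log (A / B) := by
        rw [Real.log_div hai.ne' hc.ne', Real.log_mul hbi.ne' (by positivity),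
          Real.log_div hai.ne' hbi.ne']
        ring
      rw [h2] at h1
      nlinarith [h1]
    have := Finset.sum_le_sum key
    rw [Finset.sum_add_distrib, ← Finset.sum_mul, ← hA'] at this
    have hsub : ∑ i ∈ s, (a i - b i * (A / B)) = 0 := by
      rw [Finset.sum_sub_distrib, ← Finset.sum_mul, ← hA', ← hB']
      field_simp
      ring
    rw [hsub] at this
    linarith

private lemma sum_prod_eq {n : ℕ} {X : Type*} [Fintype X] (h : Fin n → X → ℝ) :
    ∑ xs : Fin n → X, ∏ i, h i (xs i) = ∏ i, ∑ x, h i x := by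
  classical
  rw [Finset.prod_univ_sum, Fintype.piFinset_univ]

private lemma sum_prod_mul {n : ℕ} {X : Type*} [Fintype X] (f g : X → ℝ)
    (hf : ∑ x, f x = 1) (i : Fin n) :
    ∑ xs : Fin n → X, (∏ j, f (xs j)) * g (xs i) = ∑ x, f x * g x := by
  classical
  set H : Fin n → X → ℝ := fun j x => if j = i then f x * g x else f x with hH
  have key : ∀ xs : Fin n → X, (∏ j, f (xs j)) * g (xs i) = ∏ j, H j (xs j) := by
    intro xs
    have e1 : ∏ j, H j (xs j) = H i (xs i) * ∏ j ∈ Finset.univ.erase i, H j (xs j) :=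
      (Finset.mul_prod_erase Finset.univ (fun j => H j (xs j)) (Finset.mem_univ i)).symm
    have e2 : ∏ j, f (xs j) = f (xs i) * ∏ j ∈ Finset.univ.erase i, f (xs j) :=
      (Finset.mul_prod_erase Finset.univ (fun j => f (xs j)) (Finset.mem_univ i)).symm
    have e3 : ∏ j ∈ Finset.univ.erase i, H j (xs j) = ∏ j ∈ Finset.univ.erase i, f (xs j) :=
      Finset.prod_congr rfl (fun j hj => by
        simp only [hH, if_neg (Finset.mem_erase.mp hj).1])
    rw [e1, e3, e2]
    simp only [hH, if_pos rfl]
    ring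
  rw [Finset.sum_congr rfl (fun xs _ => key xs), sum_prod_eq]
  have e1 : ∏ j, (∑ x, H j x) = (∑ x, H i x) * ∏ j ∈ Finset.univ.erase i, (∑ x, H j x) :=
    (Finset.mul_prod_erase Finset.univ (fun j => ∑ x, H j x) (Finset.mem_univ i)).symm
  rw [e1]
  have e2 : ∀ j ∈ Finset.univ.erase i, (∑ x, H j x) = 1 := by
    intro j hj
    simp only [hH, if_neg (Finset.mem_erase.mp hj).1]
    exact hf
  rw [Finset.prod_congr rfl e2, Finset.prod_const_one, mul_one]
  simp only [hH, if_pos rfl]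

private lemma entropy_bound {p s : ℝ} (hp : 0 < p) (hs : 0 ≤ s) (h1 : p + s = 1) :
    -Real.log 2 ≤ p * Real.log p + s * Real.log s := by
  have h2 := mul_log_ge_aux hp.le (by norm_num : (0:ℝ) < 1/2)
  have e1 : Real.log (p / (1/2)) = Real.log p + Real.log 2 := by
    rw [div_div_eq_mul_div, div_one, Real.log_mul hp.ne' two_ne_zero]
  rw [e1, mul_add] at h2
  rcases eq_or_lt_of_le hs with h | h
  · have hp1 : p = 1 := by linarith
    rw [← h, hp1]
    simp [Real.log_one]
    exact Real.log_nonneg (by norm_num)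
  · have h3 := mul_log_ge_aux hs (by norm_num : (0:ℝ) < 1/2)
    have e2 : Real.log (s / (1/2)) = Real.log s + Real.log 2 := by
      rw [div_div_eq_mul_div, div_one, Real.log_mul h.ne' two_ne_zero]
    rw [e2, mul_add] at h3
    have e3 : p * Real.log 2 + s * Real.log 2 = Real.log 2 := by
      rw [← add_mul, h1, one_mul]
    linarith [h2, h3]

private lemma scalar_bound {p q s t : ℝ} (hp : 1/2 ≤ p) (hp1 : p + s = 1) (hq : 0 < q)
    (hqt : q + t = 1) (hs : 0 ≤ s) (ht : 0 ≤ t) (hst : s = 0 ∨ 0 < t) :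
    (1/2) * Real.log (1/q) - Real.log 2 ≤ p * Real.log (p/q) + s * Real.log (s/t) := by
  have hq1 : q ≤ 1 := by linarith
  have hlogq : Real.log q ≤ 0 := Real.log_nonpos hq.le hq1
  have hlq : Real.log (1/q) = -Real.log q := by rw [one_div, Real.log_inv]
  have hppos : 0 < p := by linarith
  have hlog2 : 0 < Real.log 2 := Real.log_pos (by norm_num)
  rcases hst with h0 | htpos
  · subst h0
    have hp1' : p = 1 := by linarith
    subst hp1'
    simp only [one_mul, zero_mul, add_zero, one_div]
    rw [Real.log_inv]
    nlinarith [hlogq]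
  · have ht1 : t ≤ 1 := by linarith
    have hlogt : Real.log t ≤ 0 := Real.log_nonpos ht ht1
    have esplit : s * Real.log (s/t) = s * Real.log s - s * Real.log t := by
      rcases eq_or_lt_of_le hs with h | h
      · rw [← h]; ring_nf
      · rw [Real.log_div h.ne' htpos.ne']; ring
    have epsplit : p * Real.log (p/q) = p * Real.log p - p * Real.log q := by
      rw [Real.log_div hppos.ne' hq.ne']; ring
    have hent := entropy_bound hppos hs hp1
    rw [hlq, esplit, epsplit]
    have h1 : (1/2) * (-Real.log q) ≤ p * (-Real.log q) :=
      mul_le_mul_of_nonneg_right hp (by linarith)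
    have h2 : 0 ≤ s * (-Real.log t) := mul_nonneg hs (by linarith)
    nlinarith [hent, h1, h2]

end FanoHelpers

set_option maxHeartbeats 1000000 in
/-- Lemma (Fano variant): if `n` is below the stated threshold involving pairwise
symmetrized KL divergences, then any decoder over the family `P_1, …, P_M` is
unreliable: it errs with probability at least `1/2` for some index. -/
theorem fano_variant {X : Type*} [Fintype X] (M n : ℕ) (hM : 5 ≤ M) (hn : 1 ≤ n)
    (P : Fin M → X → ℝ)
    (hpos : ∀ k x, 0 < P k x) (hsum : ∀ k, ∑ x, P k x = 1)
    (hcond : (n : ℝ) < Real.log ((M : ℝ) / 4) /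
        (2 / (M : ℝ) ^ 2 *
          ∑ k : Fin M, ∑ l : Fin M, if k < l then
            ((∑ x, P k x * Real.log (P k x / P l x)) +
              (∑ x, P l x * Real.log (P l x / P k x)))
          else 0))
    (φ : (Fin n → X) → Fin M) :
    ∃ k : Fin M,
      (1 : ℝ) / 2 ≤ ∑ xs : Fin n → X, if φ xs ≠ k then ∏ i, P k (xs i) else 0 := by
  classical
  by_contra hcon
  push_neg at hcon
  have hM0 : (0:ℝ) < M := by
    have : (5:ℝ) ≤ M := by exact_mod_cast hM
    linarith
  have hn0 : (0:ℝ) < n := by exact_mod_cast hn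
  set Df : Fin M → Fin M → ℝ :=
    fun k l => ∑ x, P k x * Real.log (P k x / P l x) with hDf
  have hcond' : (n : ℝ) < Real.log ((M : ℝ) / 4) /
      (2 / (M : ℝ) ^ 2 * ∑ k : Fin M, ∑ l : Fin M,
        if k < l then Df k l + Df l k else 0) := hcond
  set Q : Fin M → (Fin n → X) → ℝ := fun k xs => ∏ i, P k (xs i) with hQ
  have hQpos : ∀ k xs, 0 < Q k xs := fun k xs =>
    Finset.prod_pos (fun i _ => hpos k _)
  have hQsum : ∀ k, ∑ xs : Fin n → X, Q k xs = 1 := by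
    intro k
    have e : ∑ xs : Fin n → X, ∏ i, P k (xs i) = ∏ i : Fin n, ∑ x, P k x :=
      sum_prod_eq (fun _ => P k)
    rw [hQ, e]
    simp [hsum k]
  set Qb : (Fin n → X) → ℝ := fun xs => (∑ l, Q l xs) / M with hQb
  have hQbpos : ∀ xs, 0 < Qb xs := fun xs => by
    have : 0 < ∑ l, Q l xs :=
      Finset.sum_pos (fun l _ => hQpos l xs) ⟨⟨0, by omega⟩, Finset.mem_univ _⟩
    positivity
  have hQbsum : ∑ xs : Fin n → X, Qb xs = 1 := by
    rw [hQb]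
    rw [← Finset.sum_div, Finset.sum_comm]
    simp only [hQsum]
    simp
    omega
  set A : Fin M → Finset (Fin n → X) :=
    fun k => Finset.univ.filter (fun xs => φ xs = k) with hA
  set p : Fin M → ℝ := fun k => ∑ xs ∈ A k, Q k xs with hp
  set q : Fin M → ℝ := fun k => ∑ xs ∈ A k, Qb xs with hq
  -- p k > 1/2
  have hpk : ∀ k, 1/2 < p k := by
    intro k
    have hsplit : ∀ xs, Q k xs =
        (if φ xs = k then Q k xs else 0) + (if φ xs ≠ k then Q k xs else 0) := by
      intro xs; by_cases h : φ xs = k <;> simp [h]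
    have e0 : p k = ∑ xs : Fin n → X, (if φ xs = k then Q k xs else 0) := by
      simp only [hp, hA]
      exact Finset.sum_filter _ _
    have e1 : (1:ℝ) = p k + ∑ xs : Fin n → X, (if φ xs ≠ k then Q k xs else 0) := by
      rw [e0, ← hQsum k, ← Finset.sum_add_distrib]
      exact Finset.sum_congr rfl (fun xs _ => hsplit xs)
    have h2 := hcon k
    rw [hQ] at e1
    linarith [e1, h2]
  have hApk : ∀ k, 0 < p k := fun k => lt_trans (by norm_num) (hpk k)
  have hAne : ∀ k, (A k).Nonempty := by
    intro k
    rcases (A k).eq_empty_or_nonempty with h | h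
    · exfalso; have := hpk k; rw [hp] at this; simp only [h] at this
      rw [Finset.sum_empty] at this; linarith
    · exact h
  have hqpos : ∀ k, 0 < q k := fun k =>
    Finset.sum_pos (fun xs _ => hQbpos xs) (hAne k)
  -- q sums to 1
  have hqsum : ∑ k, q k = 1 := by
    rw [hq]
    simp only [hA, Finset.sum_filter]
    rw [Finset.sum_comm]
    have e : ∀ xs : Fin n → X, (∑ k, if φ xs = k then Qb xs else 0) = Qb xs := by
      intro xs
      rw [Finset.sum_ite_eq Finset.univ (φ xs) (fun _ => Qb xs)]
      simp
    rw [Finset.sum_congr rfl (fun xs _ => e xs)]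
    exact hQbsum
  -- Step 1: per-k lower bound on D(Q_k ‖ Qb)
  have step1 : ∀ k, (1/2) * Real.log (1 / q k) - Real.log 2 ≤
      ∑ xs : Fin n → X, Q k xs * Real.log (Q k xs / Qb xs) := by
    intro k
    set s := ∑ xs ∈ Finset.univ.filter (fun xs => ¬ φ xs = k), Q k xs with hs
    set t := ∑ xs ∈ Finset.univ.filter (fun xs => ¬ φ xs = k), Qb xs with ht
    have hsplitQ : p k + s = 1 := by
      rw [hp, hs, hA, Finset.sum_filter_add_sum_filter_not]
      exact hQsum k
    have hsplitQb : q k + t = 1 := by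
      rw [hq, ht, hA, Finset.sum_filter_add_sum_filter_not]
      exact hQbsum
    have hs0 : 0 ≤ s := Finset.sum_nonneg (fun xs _ => (hQpos k xs).le)
    have ht0 : 0 ≤ t := Finset.sum_nonneg (fun xs _ => (hQbpos xs).le)
    have hst : s = 0 ∨ 0 < t := by
      rcases (Finset.univ.filter (fun xs => ¬ φ xs = k)).eq_empty_or_nonempty with h | h
      · left; rw [hs, h, Finset.sum_empty]
      · right; exact Finset.sum_pos (fun xs _ => hQbpos xs) h
    have h1 := log_sum_ineq (A k) (Q k) Qb (fun xs _ => hQpos k xs) (fun xs _ => hQbpos xs)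
    have h2 := log_sum_ineq (Finset.univ.filter (fun xs => ¬ φ xs = k)) (Q k) Qb
      (fun xs _ => hQpos k xs) (fun xs _ => hQbpos xs)
    have hb := scalar_bound (hpk k).le hsplitQ (hqpos k) hsplitQb hs0 ht0 hst
    have hsplitD : (∑ xs ∈ A k, Q k xs * Real.log (Q k xs / Qb xs)) +
        (∑ xs ∈ Finset.univ.filter (fun xs => ¬ φ xs = k),
          Q k xs * Real.log (Q k xs / Qb xs)) =
        ∑ xs : Fin n → X, Q k xs * Real.log (Q k xs / Qb xs) := by
      rw [hA]; exact Finset.sum_filter_add_sum_filter_not _ _ _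
    rw [hp] at hb
    rw [hq] at hb
    linarith [h1, h2, hb, hsplitD]
  -- tensorization
  have tensor : ∀ k l, ∑ xs : Fin n → X, Q k xs * Real.log (Q k xs / Q l xs) =
      (n:ℝ) * Df k l := by
    intro k l
    have e1 : ∀ xs : Fin n → X, Real.log (Q k xs / Q l xs) =
        ∑ i, Real.log (P k (xs i) / P l (xs i)) := by
      intro xs
      rw [hQ, ← Finset.prod_div_distrib,
        Real.log_prod (fun i _ => ne_of_gt (div_pos (hpos k _) (hpos l _)))]
    calc ∑ xs : Fin n → X, Q k xs * Real.log (Q k xs / Q l xs)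
        = ∑ xs : Fin n → X, ∑ i, Q k xs * Real.log (P k (xs i) / P l (xs i)) := by
          refine Finset.sum_congr rfl (fun xs _ => ?_)
          rw [e1 xs, Finset.mul_sum]
      _ = ∑ i : Fin n, ∑ xs : Fin n → X,
            (∏ j, P k (xs j)) * Real.log (P k (xs i) / P l (xs i)) := by
          rw [Finset.sum_comm]
      _ = ∑ _i : Fin n, ∑ x, P k x * Real.log (P k x / P l x) := by
          refine Finset.sum_congr rfl (fun i _ => ?_)
          exact sum_prod_mul (P k) (fun x => Real.log (P k x / P l x)) (hsum k) i
      _ = (n:ℝ) * Df k l := by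
          rw [Finset.sum_const, Finset.card_univ, Fintype.card_fin, nsmul_eq_mul, hDf]
  -- Step 2: convexity bound
  have step2 : ∀ k, ∑ xs : Fin n → X, Q k xs * Real.log (Q k xs / Qb xs) ≤
      (n:ℝ)/M * ∑ l, Df k l := by
    intro k
    have point : ∀ xs : Fin n → X, Q k xs * Real.log (Q k xs / Qb xs) ≤
        (1/(M:ℝ)) * ∑ l, Q k xs * Real.log (Q k xs / Q l xs) := by
      intro xs
      have hcav : ∑ l, Real.log (Q l xs) ≤ (M:ℝ) * Real.log (Qb xs) := by
        have key : ∀ l : Fin M, Real.log (Q l xs) ≤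
            Real.log (Qb xs) + Q l xs / Qb xs - 1 :=
          fun l => log_le_aux (hQpos l xs) (hQbpos xs)
        have h := Finset.sum_le_sum (fun l (_ : l ∈ Finset.univ) => key l)
        have e : ∑ l, (Real.log (Qb xs) + Q l xs / Qb xs - 1) =
            (M:ℝ) * Real.log (Qb xs) + (∑ l, Q l xs) / Qb xs - M := by
          rw [Finset.sum_sub_distrib, Finset.sum_add_distrib, ← Finset.sum_div]
          simp [Finset.card_univ]
        have hS : 0 < ∑ l, Q l xs :=
          Finset.sum_pos (fun l _ => hQpos l xs) ⟨k, Finset.mem_univ _⟩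
        have e2 : (∑ l, Q l xs) / Qb xs = M := by
          simp only [hQb]
          rw [div_div_eq_mul_div, mul_comm, mul_div_assoc, div_self hS.ne', mul_one]
        rw [e, e2] at h
        linarith
      have e3 : ∀ l, Q k xs * Real.log (Q k xs / Q l xs) =
          Q k xs * Real.log (Q k xs) - Q k xs * Real.log (Q l xs) := by
        intro l
        rw [Real.log_div (hQpos k xs).ne' (hQpos l xs).ne']
        ring
      have e4 : Real.log (Q k xs / Qb xs) =
          Real.log (Q k xs) - Real.log (Qb xs) :=
        Real.log_div (hQpos k xs).ne' (hQbpos xs).ne'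
      have hQk := (hQpos k xs).le
      have goal_eq : (1/(M:ℝ)) * ∑ l, Q k xs * Real.log (Q k xs / Q l xs) =
          Q k xs * Real.log (Q k xs) -
            (1/(M:ℝ)) * (Q k xs * ∑ l, Real.log (Q l xs)) := by
        rw [Finset.sum_congr rfl (fun l _ => e3 l), Finset.sum_sub_distrib,
          Finset.sum_const, Finset.card_univ, Fintype.card_fin, nsmul_eq_mul,
          ← Finset.mul_sum]
        field_simp
      rw [goal_eq, e4]
      have h5 : Q k xs * ∑ l, Real.log (Q l xs) ≤
          Q k xs * ((M:ℝ) * Real.log (Qb xs)) :=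
        mul_le_mul_of_nonneg_left hcav hQk
      have h6 : (1/(M:ℝ)) * (Q k xs * ∑ l, Real.log (Q l xs)) ≤
          (1/(M:ℝ)) * (Q k xs * ((M:ℝ) * Real.log (Qb xs))) :=
        mul_le_mul_of_nonneg_left h5 (one_div_pos.mpr hM0).le
      have e7 : (1/(M:ℝ)) * (Q k xs * ((M:ℝ) * Real.log (Qb xs))) =
          Q k xs * Real.log (Qb xs) := by
        field_simp
      have e9 : Q k xs * (Real.log (Q k xs) - Real.log (Qb xs)) =
          Q k xs * Real.log (Q k xs) - Q k xs * Real.log (Qb xs) := by ring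
      rw [e9]
      linarith [h6, e7]
    calc ∑ xs : Fin n → X, Q k xs * Real.log (Q k xs / Qb xs)
        ≤ ∑ xs : Fin n → X, (1/(M:ℝ)) * ∑ l, Q k xs * Real.log (Q k xs / Q l xs) :=
          Finset.sum_le_sum (fun xs _ => point xs)
      _ = (1/(M:ℝ)) * ∑ l, ∑ xs : Fin n → X, Q k xs * Real.log (Q k xs / Q l xs) := by
          rw [← Finset.mul_sum, Finset.sum_comm]
      _ = (1/(M:ℝ)) * ∑ l, (n:ℝ) * Df k l := by
          rw [Finset.sum_congr rfl (fun l _ => tensor k l)]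
      _ = (n:ℝ)/M * ∑ l, Df k l := by
          rw [← Finset.mul_sum]; ring
  -- Jensen: ∑ log(1/q k) ≥ M log M
  have hjensen : (M:ℝ) * Real.log M ≤ ∑ k, Real.log (1 / q k) := by
    have key : ∀ k : Fin M, Real.log (q k) ≤
        Real.log ((1:ℝ)/M) + (M:ℝ) * q k - 1 := by
      intro k
      have h := log_le_aux (hqpos k) (one_div_pos.mpr hM0)
      have e : q k / (1/(M:ℝ)) = (M:ℝ) * q k := by field_simp
      rw [e] at h
      linarith
    have h := Finset.sum_le_sum (fun k (_ : k ∈ Finset.univ) => key k)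
    have e : ∑ k : Fin M, (Real.log ((1:ℝ)/M) + (M:ℝ) * q k - 1) =
        (M:ℝ) * Real.log ((1:ℝ)/M) + (M:ℝ) * (∑ k, q k) - M := by
      rw [Finset.sum_sub_distrib, Finset.sum_add_distrib, ← Finset.mul_sum]
      simp [Finset.card_univ]
    rw [e, hqsum] at h
    have e2 : Real.log ((1:ℝ)/M) = -Real.log M := by
      rw [one_div, Real.log_inv]
    rw [e2] at h
    have e3 : ∑ k : Fin M, Real.log (1 / q k) = -∑ k, Real.log (q k) := by
      rw [← Finset.sum_neg_distrib]
      refine Finset.sum_congr rfl (fun k _ => ?_)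
      rw [one_div, Real.log_inv]
    rw [e3]
    linarith
  -- reindexing: total sum equals the condition sum
  have hdiag : ∀ k, Df k k = 0 := by
    intro k
    rw [hDf]
    refine Finset.sum_eq_zero (fun x _ => ?_)
    rw [div_self (hpos k x).ne', Real.log_one, mul_zero]
  have hTT : ∑ k, ∑ l, Df k l =
      ∑ k : Fin M, ∑ l : Fin M, if k < l then Df k l + Df l k else 0 := by
    have e : ∀ k l, Df k l =
        (if k < l then Df k l else 0) + (if l < k then Df k l else 0) := by
      intro k l
      rcases lt_trichotomy k l with h | h | h
      · simp [h, asymm h]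
      · subst h; simp [lt_irrefl, hdiag k]
      · simp [h, asymm h]
    calc ∑ k, ∑ l, Df k l
        = ∑ k : Fin M, ∑ l : Fin M,
            ((if k < l then Df k l else 0) + (if l < k then Df k l else 0)) := by
          exact Finset.sum_congr rfl (fun k _ => Finset.sum_congr rfl (fun l _ => e k l))
      _ = (∑ k : Fin M, ∑ l : Fin M, if k < l then Df k l else 0) +
            (∑ k : Fin M, ∑ l : Fin M, if l < k then Df k l else 0) := by
          rw [← Finset.sum_add_distrib]
          exact Finset.sum_congr rfl (fun k _ => Finset.sum_add_distrib)
      _ = (∑ k : Fin M, ∑ l : Fin M, if k < l then Df k l else 0) +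
            (∑ k : Fin M, ∑ l : Fin M, if k < l then Df l k else 0) := by
          congr 1
          rw [Finset.sum_comm]
      _ = ∑ k : Fin M, ∑ l : Fin M, if k < l then Df k l + Df l k else 0 := by
          rw [← Finset.sum_add_distrib]
          refine Finset.sum_congr rfl (fun k _ => ?_)
          rw [← Finset.sum_add_distrib]
          refine Finset.sum_congr rfl (fun l _ => ?_)
          split_ifs <;> ring
  set T := ∑ k : Fin M, ∑ l : Fin M, if k < l then Df k l + Df l k else 0 with hT
  clear_value T
  -- main inequality
  have hlogM4 : Real.log ((M:ℝ)/4) = Real.log M - 2 * Real.log 2 := by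
    rw [Real.log_div hM0.ne' (by norm_num), show ((4:ℝ)) = 2^2 by norm_num,
      Real.log_pow]
    push_cast; ring
  have main : (M:ℝ)/2 * Real.log ((M:ℝ)/4) ≤ (n:ℝ)/M * T := by
    have c1 : ∑ k : Fin M, ((1/2) * Real.log (1 / q k) - Real.log 2) ≤
        ∑ k, ∑ xs : Fin n → X, Q k xs * Real.log (Q k xs / Qb xs) :=
      Finset.sum_le_sum (fun k _ => step1 k)
    have c2 : ∑ k, ∑ xs : Fin n → X, Q k xs * Real.log (Q k xs / Qb xs) ≤
        ∑ k, (n:ℝ)/M * ∑ l, Df k l :=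
      Finset.sum_le_sum (fun k _ => step2 k)
    have c3 : ∑ k : Fin M, ((1/2) * Real.log (1 / q k) - Real.log 2) =
        (1/2) * (∑ k, Real.log (1 / q k)) - (M:ℝ) * Real.log 2 := by
      rw [Finset.sum_sub_distrib, ← Finset.mul_sum, Finset.sum_const]
      simp [Finset.card_univ]
    have c4 : ∑ k : Fin M, ((n:ℝ)/M * ∑ l, Df k l) = (n:ℝ)/M * T := by
      rw [← Finset.mul_sum, hTT, hT]
    have c5 : (M:ℝ)/2 * Real.log ((M:ℝ)/4) ≤
        (1/2) * (∑ k, Real.log (1 / q k)) - (M:ℝ) * Real.log 2 := by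
      rw [hlogM4]
      nlinarith [hjensen]
    rw [c3] at c1
    rw [c4] at c2
    linarith
  -- conclusion
  have hpos4 : 0 < Real.log ((M:ℝ)/4) := by
    apply Real.log_pos
    have : (5:ℝ) ≤ M := by exact_mod_cast hM
    linarith
  have hTpos : 0 < T := by
    by_contra h
    push_neg at h
    have h1 : (n:ℝ)/M * T ≤ 0 := mul_nonpos_of_nonneg_of_nonpos (by positivity) h
    nlinarith [main, hpos4, hM0]
  have hden : 0 < 2 / (M:ℝ)^2 * T := mul_pos (by positivity) hTpos
  rw [lt_div_iff₀ hden] at hcond'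
  have e : (n:ℝ)/M * T = (M:ℝ)/2 * ((n:ℝ) * (2/(M:ℝ)^2 * T)) := by
    field_simp
  have : (M:ℝ)/2 * ((n:ℝ) * (2/(M:ℝ)^2 * T)) < (M:ℝ)/2 * Real.log ((M:ℝ)/4) := by
    apply mul_lt_mul_of_pos_left hcond' (by positivity)
  rw [← e] at this
  linarith [main]
end
end

section
/- Let m ≥ 2 be an integer and λ > 0 a real with ω := λ·m ≥ 2. Let G^{st} be the graph on m vertices obtained from the complete graph K_m by removing one edge (s,t), and let θ be the parameter vector with θ_{uv} = λ for every edge (u,v) of G^{st} and θ_{st} = 0. Then under the Ising model P_θ: (i) the likelihood ratio satisfies P_θ[X_s X_t = +1] / P_θ[X_s X_t = −1] ≥ exp(ω/2 − 3λ/2)/(m+1); and (ii) the mean parameter satisfies E_θ[X_s X_t] ≥ 1 − 2(m+1) exp(3λ/2) / ( exp(ω/2) + (m+1) exp(3λ/2) ). -/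
open scoped Classical BigOperators
open Real

noncomputable section

lemma sgn_sq (b : Bool) : sgn b * sgn b = 1 := by cases b <;> simp [sgn]

lemma sgn_not (b : Bool) : sgn (!b) = - sgn b := by cases b <;> simp [sgn]

lemma sgn_abs (b : Bool) : |sgn b| = 1 := by cases b <;> simp [sgn]

lemma sgn_mul_eq_one (a b : Bool) (h : a = b) : sgn a * sgn b = 1 := by subst h; exact sgn_sq a

lemma sgn_mul_eq_neg_one (a b : Bool) (h : a ≠ b) : sgn a * sgn b = -1 := by
  cases a <;> cases b <;> simp_all [sgn]

lemma sgn_mul_eq_one_iff (a b : Bool) : sgn a * sgn b = 1 ↔ a = b := by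
  cases a <;> cases b <;> norm_num [sgn]

lemma sgn_mul_eq_neg_one_iff (a b : Bool) : sgn a * sgn b = -1 ↔ a ≠ b := by
  cases a <;> cases b <;> norm_num [sgn]

lemma flip_invol {m : ℕ} (t : Fin m) :
    Function.Involutive (fun x : Fin m → Bool => Function.update x t (!(x t))) := by
  intro x
  simp only [Function.update_self]
  rw [Function.update_idem, Bool.not_not, Function.update_eq_self]

lemma flip_sum {m : ℕ} (s t : Fin m) (hst : s ≠ t) (g : (Fin m → Bool) → ℝ) :
    ∑ x : Fin m → Bool, (if x s ≠ x t then g (Function.update x t (!(x t))) else 0)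
      = ∑ y : Fin m → Bool, (if y s = y t then g y else 0) := by
  set Φ := fun x : Fin m → Bool => Function.update x t (!(x t)) with hΦ
  have hbij : Function.Bijective Φ := (flip_invol t).bijective
  refine (Fintype.sum_bijective Φ hbij _ _ fun x => ?_).symm
  have hs : Φ x s = x s := Function.update_of_ne hst _ x
  have ht : Φ x t = !(x t) := Function.update_self _ _ _
  have hinv : Function.update (Φ x) t (!(Φ x t)) = x := flip_invol t x
  have hcond : ((Φ x) s ≠ (Φ x) t) ↔ (x s = x t) := by
    rw [hs, ht]; cases hxs : x s <;> cases hxt : x t <;> simp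
  rw [hinv]
  exact (if_congr hcond rfl rfl).symm

lemma sum_sgn_update {m : ℕ} (x : Fin m → Bool) (t : Fin m) (v : Bool) :
    ∑ u, sgn (Function.update x t v u) = (∑ u, sgn (x u)) - sgn (x t) + sgn v := by
  have hpt : ∀ u, sgn (Function.update x t v u)
      = Function.update (fun u => sgn (x u)) t (sgn v) u := by
    intro u
    by_cases h : u = t
    · subst h; simp
    · simp [Function.update_of_ne h]
  rw [Finset.sum_congr rfl fun u _ => hpt u]
  rw [Finset.sum_update_of_mem (Finset.mem_univ t)]
  rw [Finset.sum_eq_sum_sdiff_singleton_add (Finset.mem_univ t) (fun u => sgn (x u))]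
  ring

lemma count_ne {m : ℕ} (s t : Fin m) (hst : s ≠ t) (hm : 1 ≤ m) :
    ∑ x : Fin m → Bool, (if x s ≠ x t then (1:ℝ) else 0) = 2^(m-1) := by
  have h1 : ∑ x : Fin m → Bool, (if x s ≠ x t then (1:ℝ) else 0)
      = ∑ y : Fin m → Bool, (if y s = y t then (1:ℝ) else 0) := by
    have := flip_sum s t hst (fun _ => (1:ℝ))
    simpa using this
  have h2 : ∑ x : Fin m → Bool, ((if x s ≠ x t then (1:ℝ) else 0)
      + (if x s = x t then (1:ℝ) else 0)) = (2:ℝ)^m := by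
    have hcard : (Finset.univ : Finset (Fin m → Bool)).card = 2^m := by
      simp [Fintype.card_fun]
    have : ∀ x : Fin m → Bool, (if x s ≠ x t then (1:ℝ) else 0)
        + (if x s = x t then (1:ℝ) else 0) = 1 := by
      intro x; by_cases h : x s = x t <;> simp [h]
    rw [Finset.sum_congr rfl fun x _ => this x]
    simp [hcard]
  rw [Finset.sum_add_distrib, ← h1] at h2
  have hpow : (2:ℝ)^m = 2 * 2^(m-1) := by
    conv_lhs => rw [show m = (m-1) + 1 from (Nat.succ_pred_eq_of_pos hm).symm]
    rw [pow_succ]; ring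
  linarith

lemma branch2_core (m : ℕ) (lam a : ℝ) (hm : 2 ≤ m) (hlam : 0 < lam)
    (hom : 2 ≤ lam * m)
    (hL : 2 * lam * |a| < lam * ((m : ℝ) - 3) / 2 - Real.log (((m : ℝ) + 1) / 4)) :
    lam * ((m : ℝ) - 3) / 2 - Real.log (((m : ℝ) + 1) / 4) + 2 * lam
      + ((m : ℝ) - 1) * Real.log 2 ≤ lam * ((m : ℝ)^2 - a^2) / 2 := by
  have habs : 0 ≤ 2 * lam * |a| := by positivity
  rcases lt_or_ge (m : ℝ) 4 with hM4 | hM4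
  · -- m = 2 or 3 : contradiction with hL
    exfalso
    have hm4 : m < 4 := by exact_mod_cast hM4
    interval_cases m
    · -- m = 2
      push_cast at hL hom
      have hml : lam ≥ 1 := by nlinarith [hom]
      have hlog : Real.log (3 / 4) > -(1/2) := by
        have h34 : Real.log (3/4) = - Real.log (4/3) := by
          rw [show (3:ℝ)/4 = (4/3)⁻¹ by norm_num, Real.log_inv]
        rw [h34, gt_iff_lt, neg_lt_neg_iff]
        rw [Real.log_lt_iff_lt_exp (by norm_num)]
        have h1 : Real.exp (1/2) * Real.exp (1/2) = Real.exp 1 := by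
          rw [← Real.exp_add]; norm_num
        nlinarith [Real.exp_one_gt_d9, Real.exp_pos (1/2)]
      rw [show ((2:ℝ)+1)/4 = 3/4 by norm_num] at hL
      nlinarith [hL, habs, hlog, hml]
    · -- m = 3
      push_cast at hL
      rw [show ((3:ℝ)+1)/4 = 1 by norm_num, Real.log_one] at hL
      nlinarith [hL, habs]
  · -- m ≥ 4
    have hP : 0 ≤ Real.log (((m:ℝ) + 1) / 4) := Real.log_nonneg (by linarith)
    have hLb : lam * ((m:ℝ) - 3) / 2 - Real.log (((m:ℝ) + 1) / 4)
        ≤ lam * ((m:ℝ) - 3) / 2 := by linarith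
    have haM : |a| ≤ ((m:ℝ) - 3) / 4 := by
      have h1 : 2 * lam * |a| ≤ lam * ((m:ℝ) - 3) / 2 := le_of_lt (lt_of_lt_of_le hL hLb)
      nlinarith [abs_nonneg a]
    have ha2 : a ^ 2 ≤ ((m:ℝ) - 3) ^ 2 / 16 := by
      have h := sq_abs a
      nlinarith [abs_nonneg a, haM]
    have hlog2 : Real.log 2 ≤ 0.7 := le_of_lt (lt_trans Real.log_two_lt_d9 (by norm_num))
    have hlog2' : 0 ≤ Real.log 2 := Real.log_nonneg (by norm_num)
    have h15 : (0 : ℝ) ≤ 15 * (m:ℝ) ^ 2 - 10 * (m:ℝ) - 25 := by nlinarith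
    have h8 : 0 ≤ (lam * (m:ℝ) - 2) * (15 * (m:ℝ) ^ 2 - 10 * (m:ℝ) - 25) :=
      mul_nonneg (by linarith) h15
    have h9 : lam * a ^ 2 ≤ lam * (((m:ℝ) - 3) ^ 2 / 16) :=
      mul_le_mul_of_nonneg_left ha2 (le_of_lt hlam)
    have h10 : ((m:ℝ) - 1) * Real.log 2 ≤ ((m:ℝ) - 1) * 0.7 :=
      mul_le_mul_of_nonneg_left hlog2 (by linarith)
    nlinarith [h8, h9, h10, hP, hlam, hM4,
      mul_pos hlam (show (0:ℝ) < (m:ℝ) by linarith)]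

lemma energy_formula {m : ℕ} (s t : Fin m) (lam : ℝ) (hst : s ≠ t)
    (θ : Fin m → Fin m → ℝ)
    (hθ : θ = fun u v =>
      if u ≠ v ∧ ¬((u = s ∧ v = t) ∨ (u = t ∧ v = s)) then lam else 0)
    (x : Fin m → Bool) :
    energy θ x = lam * ((∑ u, sgn (x u))^2 - (m : ℝ)) / 2
      - lam * (sgn (x s) * sgn (x t)) := by
  subst hθ
  set σ : Fin m → ℝ := fun u => sgn (x u) with hσ
  set f : Fin m → Fin m → ℝ := fun u v =>
    (if u ≠ v ∧ ¬((u = s ∧ v = t) ∨ (u = t ∧ v = s)) then lam else 0) * σ u * σ v with hf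
  have hsymm : ∀ u v, f u v = f v u := by
    intro u v
    have hiff : (u ≠ v ∧ ¬((u = s ∧ v = t) ∨ (u = t ∧ v = s))) ↔
        (v ≠ u ∧ ¬((v = s ∧ u = t) ∨ (v = t ∧ u = s))) := by
      constructor <;> rintro ⟨h1, h2⟩ <;> exact ⟨h1.symm, by tauto⟩
    simp only [hf]
    rw [if_congr hiff rfl rfl]; ring
  have hdiag : ∀ u, f u u = 0 := by
    intro u; simp [hf]
  have hσsq : ∀ u, σ u * σ u = 1 := fun u => sgn_sq (x u)
  -- pointwise decomposition of the full double sum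
  have hpt : ∀ u v, f u v + (if u = v then lam * (σ u * σ v) else 0)
      + (if ((u = s ∧ v = t) ∨ (u = t ∧ v = s)) then lam * (σ u * σ v) else 0)
      = lam * (σ u * σ v) := by
    intro u v
    by_cases huv : u = v
    · have hnp : ¬((u = s ∧ v = t) ∨ (u = t ∧ v = s)) := by
        rintro (⟨h1, h2⟩ | ⟨h1, h2⟩) <;> exact hst (by rw [← h1, ← h2, huv])
      have hc : ¬(u ≠ v ∧ ¬((u = s ∧ v = t) ∨ (u = t ∧ v = s))) := by tauto
      simp only [hf]
      rw [if_neg hc, if_pos huv, if_neg hnp]; ring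
    · by_cases hp : ((u = s ∧ v = t) ∨ (u = t ∧ v = s))
      · have hc : ¬(u ≠ v ∧ ¬((u = s ∧ v = t) ∨ (u = t ∧ v = s))) := by tauto
        simp only [hf]
        rw [if_neg hc, if_neg huv, if_pos hp]; ring
      · simp only [hf]
        rw [if_pos ⟨huv, hp⟩, if_neg huv, if_neg hp]; ring
  -- total double sum
  have h1 : ∑ u : Fin m, ∑ v : Fin m, lam * (σ u * σ v) = lam * (∑ u, σ u)^2 := by
    rw [sq, Finset.sum_mul_sum, Finset.mul_sum]
    exact Finset.sum_congr rfl fun u _ => by rw [Finset.mul_sum]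
  have h2 : ∑ u : Fin m, ∑ v : Fin m, (if u = v then lam * (σ u * σ v) else 0)
      = lam * m := by
    have : ∀ u : Fin m, ∑ v : Fin m, (if u = v then lam * (σ u * σ v) else 0) = lam := by
      intro u
      rw [Finset.sum_ite_eq Finset.univ u (fun v => lam * (σ u * σ v))]
      simp [hσsq u]
    rw [Finset.sum_congr rfl (fun u _ => this u)]
    simp [mul_comm]
  have h3 : ∑ u : Fin m, ∑ v : Fin m,
      (if ((u = s ∧ v = t) ∨ (u = t ∧ v = s)) then lam * (σ u * σ v) else 0)
      = 2 * lam * (σ s * σ t) := by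
    have hps : ∀ u v : Fin m, (if ((u = s ∧ v = t) ∨ (u = t ∧ v = s)) then lam * (σ u * σ v) else 0)
        = (if (u = s ∧ v = t) then lam * (σ u * σ v) else 0)
          + (if (u = t ∧ v = s) then lam * (σ u * σ v) else 0) := by
      intro u v
      by_cases h1' : (u = s ∧ v = t) <;> by_cases h2' : (u = t ∧ v = s)
      · exact absurd (h1'.1.symm.trans h2'.1) hst
      · rw [if_pos (Or.inl h1'), if_pos h1', if_neg h2']; ring
      · rw [if_pos (Or.inr h2'), if_neg h1', if_pos h2']; ring
      · rw [if_neg (by tauto), if_neg h1', if_neg h2']; ring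
    have key : ∀ (a b : Fin m), ∑ u : Fin m, ∑ v : Fin m,
        (if (u = a ∧ v = b) then lam * (σ u * σ v) else 0) = lam * (σ a * σ b) := by
      intro a b
      have inner : ∀ u : Fin m, ∑ v : Fin m, (if (u = a ∧ v = b) then lam * (σ u * σ v) else 0)
          = if u = a then lam * (σ u * σ b) else 0 := by
        intro u
        by_cases hu : u = a
        · simp only [hu, true_and, if_pos rfl]
          rw [Finset.sum_ite_eq' Finset.univ b (fun v => lam * (σ a * σ v))]
          simp
        · simp [hu]
      rw [Finset.sum_congr rfl (fun u _ => inner u)]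
      rw [Finset.sum_ite_eq' Finset.univ a (fun u => lam * (σ u * σ b))]
      simp
    rw [Finset.sum_congr rfl (fun u _ => Finset.sum_congr rfl (fun v _ => hps u v))]
    rw [Finset.sum_congr rfl (fun u _ => Finset.sum_add_distrib)]
    rw [Finset.sum_add_distrib, key s t, key t s]
    have : σ t * σ s = σ s * σ t := by ring
    rw [this]; ring
  have htot : ∑ u : Fin m, ∑ v : Fin m, f u v
      = lam * (∑ u, σ u)^2 - lam * m - 2 * lam * (σ s * σ t) := by
    have := Finset.sum_congr rfl (fun u (_ : u ∈ Finset.univ) =>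
      Finset.sum_congr rfl (fun v (_ : v ∈ Finset.univ) => hpt u v))
    rw [show (∑ u : Fin m, ∑ v : Fin m, (f u v + (if u = v then lam * (σ u * σ v) else 0)
      + (if ((u = s ∧ v = t) ∨ (u = t ∧ v = s)) then lam * (σ u * σ v) else 0)))
      = ∑ u : Fin m, ∑ v : Fin m, f u v
        + (∑ u : Fin m, ∑ v : Fin m, (if u = v then lam * (σ u * σ v) else 0))
        + (∑ u : Fin m, ∑ v : Fin m, (if ((u = s ∧ v = t) ∨ (u = t ∧ v = s)) then lam * (σ u * σ v) else 0))
      from by rw [← Finset.sum_add_distrib, ← Finset.sum_add_distrib]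
              exact Finset.sum_congr rfl fun u _ => by rw [← Finset.sum_add_distrib, ← Finset.sum_add_distrib]] at this
    rw [h1, h2, h3] at this
    linarith
  -- halving
  have hhalf : energy (fun u v =>
      if u ≠ v ∧ ¬((u = s ∧ v = t) ∨ (u = t ∧ v = s)) then lam else 0) x
      = (∑ u : Fin m, ∑ v : Fin m, f u v) / 2 := by
    have hsplit : ∀ u v : Fin m, f u v = (if u < v then f u v else 0)
        + (if v < u then f u v else 0) + (if u = v then f u v else 0) := by
      intro u v
      rcases lt_trichotomy u v with h | h | h
      · rw [if_pos h, if_neg (asymm h), if_neg h.ne]; ring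
      · rw [if_neg (by simp [h]), if_neg (by simp [h]), if_pos h]; ring
      · rw [if_neg (asymm h), if_pos h, if_neg h.ne']; ring
    have hd : ∀ u v : Fin m, (if u = v then f u v else 0) = 0 := by
      intro u v; by_cases h : u = v <;> simp [h, hdiag]
    have hswap : ∑ u : Fin m, ∑ v : Fin m, (if v < u then f u v else 0)
        = ∑ u : Fin m, ∑ v : Fin m, (if u < v then f u v else 0) := by
      rw [Finset.sum_comm]
      exact Finset.sum_congr rfl fun u _ => Finset.sum_congr rfl fun v _ => by
        by_cases h : u < v <;> simp [h, hsymm u v]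
    have e1 : ∑ u : Fin m, ∑ v : Fin m, f u v
        = ∑ u : Fin m, ∑ v : Fin m, (if u < v then f u v else 0)
          + ∑ u : Fin m, ∑ v : Fin m, (if v < u then f u v else 0)
          + ∑ u : Fin m, ∑ v : Fin m, (if u = v then f u v else 0) := by
      rw [← Finset.sum_add_distrib, ← Finset.sum_add_distrib]
      refine Finset.sum_congr rfl fun u _ => ?_
      rw [← Finset.sum_add_distrib, ← Finset.sum_add_distrib]
      exact Finset.sum_congr rfl fun v _ => hsplit u v
    have e2 : ∑ u : Fin m, ∑ v : Fin m, (if u = v then f u v else 0) = 0 := by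
      simp [hd]
    have henergy : energy (fun u v =>
        if u ≠ v ∧ ¬((u = s ∧ v = t) ∨ (u = t ∧ v = s)) then lam else 0) x
        = ∑ u : Fin m, ∑ v : Fin m, (if u < v then f u v else 0) := by
      unfold energy
      exact Finset.sum_congr rfl fun u _ => Finset.sum_congr rfl fun v _ => by
        by_cases h : u < v <;> simp [h, hf, hσ]
    rw [henergy, e1, hswap, e2]
    ring
  rw [hhalf, htot]
  ring

set_option maxHeartbeats 1000000 in
/-- Lemma 3 (key separation result): for the Ising model on the complete graph `K_m`
minus edge `(s,t)` with uniform edge weight `λ` and `ω = λm ≥ 2`, the likelihood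
ratio on `(s,t)` and the mean parameter `E[X_s X_t]` are lower bounded as stated. -/
theorem key_separation (m : ℕ) (lam : ℝ) (s t : Fin m)
    (hm : 2 ≤ m) (hlam : 0 < lam) (hst : s ≠ t) (hom : 2 ≤ lam * (m : ℝ))
    (θ : Fin m → Fin m → ℝ)
    (hθ : θ = fun u v =>
      if u ≠ v ∧ ¬((u = s ∧ v = t) ∨ (u = t ∧ v = s)) then lam else 0) :
    Real.exp (lam * (m : ℝ) / 2 - 3 * lam / 2) / ((m : ℝ) + 1) ≤
        prob1 θ (fun x => sgn (x s) * sgn (x t) = 1) /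
          prob1 θ (fun x => sgn (x s) * sgn (x t) = -1) ∧
      1 - 2 * ((m : ℝ) + 1) * Real.exp (3 * lam / 2) /
          (Real.exp (lam * (m : ℝ) / 2) + ((m : ℝ) + 1) * Real.exp (3 * lam / 2)) ≤
        meanPar θ s t := by
  classical
  have hm1 : 1 ≤ m := le_trans (by norm_num) hm
  have hmR : (2:ℝ) ≤ (m:ℝ) := by exact_mod_cast hm
  have hE : ∀ x : Fin m → Bool, energy θ x
      = lam * ((∑ u, sgn (x u))^2 - (m:ℝ)) / 2 - lam * (sgn (x s) * sgn (x t)) :=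
    energy_formula s t lam hst θ hθ
  set F : (Fin m → Bool) → ℝ := fun x => Real.exp (energy θ x) with hF
  set N : ℝ := ∑ x : Fin m → Bool, (if x s = x t then F x else 0) with hN
  set D : ℝ := ∑ x : Fin m → Bool, (if x s ≠ x t then F x else 0) with hD
  set c : ℝ := ((m:ℝ)+1)/4 * Real.exp (3*lam/2 - lam*(m:ℝ)/2) with hc
  have hcpos : 0 < c := by
    rw [hc]; positivity
  set xone : Fin m → Bool := fun _ => true with hxone
  have hSone : ∑ u : Fin m, sgn (xone u) = (m:ℝ) := by
    simp [hxone, sgn]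
  have hEone : energy θ xone = lam * ((m:ℝ)^2 - (m:ℝ)) / 2 - lam := by
    rw [hE xone, hSone]
    have : sgn (xone s) * sgn (xone t) = 1 := by simp [hxone, sgn]
    rw [this]; ring
  have hFnonneg : ∀ x, 0 ≤ F x := fun x => (Real.exp_pos _).le
  have hFpos : ∀ x, 0 < F x := fun x => Real.exp_pos _
  have hN1 : F xone ≤ N := by
    rw [hN]
    have h := Finset.single_le_sum
      (f := fun x : Fin m → Bool => if x s = x t then F x else 0)
      (fun x _ => by by_cases hx : x s = x t <;> simp [hx, hFnonneg x])
      (Finset.mem_univ xone)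
    simpa [hxone] using h
  have hNpos : 0 < N := lt_of_lt_of_le (hFpos xone) hN1
  set xst : Fin m → Bool := fun u => decide (u = s) with hxst
  have hxstne : xst s ≠ xst t := by
    simp [hxst, hst, Ne.symm hst]
  have hD1 : F xst ≤ D := by
    rw [hD]
    have h := Finset.single_le_sum
      (f := fun x : Fin m → Bool => if x s ≠ x t then F x else 0)
      (fun x _ => by by_cases hx : x s ≠ x t <;> simp [hx, hFnonneg x])
      (Finset.mem_univ xst)
    simpa [hxstne] using h
  have hDpos : 0 < D := lt_of_lt_of_le (hFpos xst) hD1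
  -- key per-configuration bound
  have key : ∀ x : Fin m → Bool, x s ≠ x t →
      F x ≤ c * F (Function.update x t (!(x t))) + c * F (Function.update x s (!(x s)))
        + c * F xone / 2^(m-1) := by
    intro x hx
    set a : ℝ := ∑ u, sgn (x u) with ha
    set g : ℝ := sgn (x s) with hg
    have hgsq : g * g = 1 := sgn_sq _
    have hgabs : |g| = 1 := sgn_abs _
    have hts : sgn (x t) = -g := by
      rw [hg]
      revert hx; cases x s <;> cases x t <;> intro hx <;>
        first
          | exact absurd rfl hx
          | simp [sgn]
    have hprod : sgn (x s) * sgn (x t) = -1 := sgn_mul_eq_neg_one _ _ hx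
    have hEx : energy θ x = lam * (a^2 - (m:ℝ)) / 2 + lam := by
      rw [hE x, hprod, ← ha]; ring
    have hnt : (!(x t)) = x s := by
      revert hx; cases x s <;> cases x t <;> decide
    have hns : (!(x s)) = x t := by
      revert hx; cases x s <;> cases x t <;> decide
    set y1 : Fin m → Bool := Function.update x t (!(x t)) with hy1
    set y2 : Fin m → Bool := Function.update x s (!(x s)) with hy2
    have hS1 : ∑ u, sgn (y1 u) = a + 2*g := by
      rw [hy1, sum_sgn_update, sgn_not, hts, ← ha]; ring
    have hS2 : ∑ u, sgn (y2 u) = a - 2*g := by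
      rw [hy2, sum_sgn_update, sgn_not, ← hg, ← ha]; ring
    have hy1s : y1 s = x s := Function.update_of_ne hst _ x
    have hy1t : y1 t = x s := by rw [hy1, Function.update_self, hnt]
    have hy2s : y2 s = x t := by rw [hy2, Function.update_self, hns]
    have hy2t : y2 t = x t := Function.update_of_ne (Ne.symm hst) _ x
    have hP1 : sgn (y1 s) * sgn (y1 t) = 1 := by
      rw [hy1s, hy1t]; exact sgn_sq _
    have hP2 : sgn (y2 s) * sgn (y2 t) = 1 := by
      rw [hy2s, hy2t]; exact sgn_sq _
    have hE1 : energy θ y1 = energy θ x + 2*lam*g*a := by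
      rw [hE y1, hS1, hP1, hEx]
      linear_combination (2*lam) * hgsq
    have hE2 : energy θ y2 = energy θ x - 2*lam*g*a := by
      rw [hE y2, hS2, hP2, hEx]
      linear_combination (2*lam) * hgsq
    have hF1 : F y1 = F x * Real.exp (2*lam*g*a) := by
      rw [hF]; simp only []
      rw [hE1, Real.exp_add]
    have hF2 : F y2 = F x * Real.exp (-(2*lam*g*a)) := by
      rw [hF]; simp only []
      rw [hE2, show energy θ x - 2*lam*g*a = energy θ x + (-(2*lam*g*a)) by ring,
        Real.exp_add]
    have habs2 : |2*lam*g*a| = 2*lam*|a| := by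
      rw [show 2*lam*g*a = (2*lam)*(g*a) by ring, abs_mul (2*lam) (g*a),
        abs_mul g a, hgabs, abs_of_pos (by positivity : (0:ℝ) < 2*lam)]
      ring
    by_cases hcase : 1 ≤ c * Real.exp (2*lam*|a|)
    · -- branch 1
      have hcosh : Real.exp (2*lam*|a|)
          ≤ Real.exp (2*lam*g*a) + Real.exp (-(2*lam*g*a)) := by
        have e1 := Real.exp_pos (2*lam*g*a)
        have e2 := Real.exp_pos (-(2*lam*g*a))
        rcases abs_cases (2*lam*g*a) with ⟨heq, _⟩ | ⟨heq, _⟩ <;>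
          rw [← habs2, heq] <;> [skip; rw [Real.exp_neg, ← Real.exp_neg]] <;> linarith
      have hstep : F x ≤ c * (F y1 + F y2) := by
        have h1 : F x * 1 ≤ F x * (c * Real.exp (2*lam*|a|)) :=
          mul_le_mul_of_nonneg_left hcase (hFnonneg x)
        have h2 : (c * F x) * Real.exp (2*lam*|a|)
            ≤ (c * F x) * (Real.exp (2*lam*g*a) + Real.exp (-(2*lam*g*a))) :=
          mul_le_mul_of_nonneg_left hcosh (by positivity)
        rw [hF1, hF2]
        nlinarith [h1, h2]
      have hpos3 : 0 ≤ c * F xone / 2^(m-1) := by positivity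
      linarith [hstep]
    · -- branch 2
      push_neg at hcase
      have hlogc : Real.log c = Real.log (((m:ℝ)+1)/4) + (3*lam/2 - lam*(m:ℝ)/2) := by
        rw [hc, Real.log_mul (by positivity) (Real.exp_ne_zero _), Real.log_exp]
      have hlt : 2 * lam * |a| < lam * ((m : ℝ) - 3) / 2 - Real.log (((m : ℝ) + 1) / 4) := by
        have h2 : Real.log (c * Real.exp (2*lam*|a|)) < 0 :=
          Real.log_neg (by positivity) hcase
        rw [Real.log_mul (ne_of_gt hcpos) (Real.exp_ne_zero _), Real.log_exp, hlogc] at h2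
        linarith
      have hcore := branch2_core m lam a hm hlam hom hlt
      have hm1R : ((m-1 : ℕ) : ℝ) = (m:ℝ) - 1 := by
        push_cast [Nat.cast_sub hm1]; ring
      have hpow : (2:ℝ)^(m-1) = Real.exp (((m:ℝ)-1) * Real.log 2) := by
        rw [← hm1R, Real.exp_nat_mul, Real.exp_log (by norm_num : (0:ℝ) < 2)]
      have hgoal2 : F x ≤ c * F xone / 2^(m-1) := by
        have hcexp : c = Real.exp (Real.log c) := (Real.exp_log hcpos).symm
        rw [hF]; simp only []
        rw [hEx, hEone, hpow, hcexp, ← Real.exp_add, ← Real.exp_sub]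
        apply Real.exp_le_exp.2
        rw [hlogc]
        linarith [hcore]
      have hpos1 : 0 ≤ c * F y1 := by positivity
      have hpos2 : 0 ≤ c * F y2 := by positivity
      linarith [hgoal2]
  -- summing the key bound
  have hsum : D ≤ 2 * c * N + c * F xone := by
    have step1 : D ≤ ∑ x : Fin m → Bool,
        (if x s ≠ x t then (c * F (Function.update x t (!(x t)))
          + c * F (Function.update x s (!(x s))) + c * F xone / 2^(m-1)) else 0) := by
      rw [hD]
      refine Finset.sum_le_sum fun x _ => ?_
      by_cases hx : x s ≠ x t
      · rw [if_pos hx, if_pos hx]; exact key x hx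
      · rw [if_neg hx, if_neg hx]
    have split : ∑ x : Fin m → Bool,
        (if x s ≠ x t then (c * F (Function.update x t (!(x t)))
          + c * F (Function.update x s (!(x s))) + c * F xone / 2^(m-1)) else 0)
        = c * (∑ x : Fin m → Bool, (if x s ≠ x t then F (Function.update x t (!(x t))) else 0))
          + c * (∑ x : Fin m → Bool, (if x s ≠ x t then F (Function.update x s (!(x s))) else 0))
          + (c * F xone / 2^(m-1)) * (∑ x : Fin m → Bool, (if x s ≠ x t then (1:ℝ) else 0)) := by
      rw [Finset.mul_sum, Finset.mul_sum, Finset.mul_sum, ← Finset.sum_add_distrib,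
        ← Finset.sum_add_distrib]
      refine Finset.sum_congr rfl fun x _ => ?_
      by_cases hx : x s ≠ x t <;> simp [hx] <;> ring
    have hflip1 : ∑ x : Fin m → Bool,
        (if x s ≠ x t then F (Function.update x t (!(x t))) else 0) = N := by
      rw [hN]; exact flip_sum s t hst F
    have hflip2 : ∑ x : Fin m → Bool,
        (if x s ≠ x t then F (Function.update x s (!(x s))) else 0) = N := by
      have h1 : ∑ x : Fin m → Bool,
          (if x s ≠ x t then F (Function.update x s (!(x s))) else 0)
          = ∑ x : Fin m → Bool, (if x t ≠ x s then F (Function.update x s (!(x s))) else 0) :=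
        Finset.sum_congr rfl fun x _ => if_congr ne_comm rfl rfl
      have h2 := flip_sum t s (Ne.symm hst) F
      rw [h1, h2, hN]
      exact Finset.sum_congr rfl fun y _ => if_congr eq_comm rfl rfl
    have hcount : ∑ x : Fin m → Bool, (if x s ≠ x t then (1:ℝ) else 0) = 2^(m-1) :=
      count_ne s t hst hm1
    have hpowne : ((2:ℝ)^(m-1)) ≠ 0 := by positivity
    calc D ≤ _ := step1
      _ = c * N + c * N + (c * F xone / 2^(m-1)) * 2^(m-1) := by
          rw [split, hflip1, hflip2, hcount]
      _ = 2 * c * N + c * F xone := by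
          rw [div_mul_cancel₀ _ hpowne]; ring
  have hDN : D ≤ 4 * c * N := by
    have h1 : c * F xone ≤ c * N := mul_le_mul_of_nonneg_left hN1 hcpos.le
    nlinarith [mul_pos hcpos hNpos]
  -- partition function
  have hZ : Zpart θ = N + D := by
    rw [Zpart, hN, hD, ← Finset.sum_add_distrib]
    refine Finset.sum_congr rfl fun x _ => ?_
    by_cases hx : x s = x t <;> simp [hx, hF]
  have hZpos : 0 < Zpart θ := by rw [hZ]; linarith
  have hZne : Zpart θ ≠ 0 := ne_of_gt hZpos
  -- probability identifications
  have hprobP : prob1 θ (fun x => sgn (x s) * sgn (x t) = 1) = N / Zpart θ := by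
    rw [prob1, hN, Finset.sum_div]
    refine Finset.sum_congr rfl fun x _ => ?_
    rw [if_congr (sgn_mul_eq_one_iff (x s) (x t)) rfl rfl]
    by_cases hx : x s = x t <;> simp [hx, isingP, hF]
  have hprobM : prob1 θ (fun x => sgn (x s) * sgn (x t) = -1) = D / Zpart θ := by
    rw [prob1, hD, Finset.sum_div]
    refine Finset.sum_congr rfl fun x _ => ?_
    rw [if_congr (sgn_mul_eq_neg_one_iff (x s) (x t)) rfl rfl]
    by_cases hx : x s = x t <;> simp [hx, isingP, hF]
  have hmean : meanPar θ s t = (N - D) / Zpart θ := by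
    rw [meanPar, sub_div, hN, hD, Finset.sum_div, Finset.sum_div, ← Finset.sum_sub_distrib]
    refine Finset.sum_congr rfl fun x _ => ?_
    by_cases hx : x s = x t
    · rw [sgn_mul_eq_one _ _ hx]
      simp [hx, isingP, hF]
    · rw [sgn_mul_eq_neg_one _ _ hx]
      simp [hx, isingP, hF]
  have h4c : 4 * c = ((m:ℝ)+1) * Real.exp (3*lam/2 - lam*(m:ℝ)/2) := by
    rw [hc]; ring
  constructor
  · -- part (i)
    rw [hprobP, hprobM]
    have hratio : N / Zpart θ / (D / Zpart θ) = N / D := by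
      field_simp
    rw [hratio, div_le_div_iff₀ (by positivity) hDpos]
    calc Real.exp (lam * (m:ℝ) / 2 - 3*lam/2) * D
        ≤ Real.exp (lam * (m:ℝ) / 2 - 3*lam/2) * (4*c*N) :=
          mul_le_mul_of_nonneg_left hDN (Real.exp_pos _).le
      _ = ((m:ℝ)+1) * N * (Real.exp (lam * (m:ℝ) / 2 - 3*lam/2)
            * Real.exp (3*lam/2 - lam*(m:ℝ)/2)) := by rw [h4c]; ring
      _ = ((m:ℝ)+1) * N := by
          rw [← Real.exp_add, show lam * (m:ℝ) / 2 - 3*lam/2 + (3*lam/2 - lam*(m:ℝ)/2) = 0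
            by ring, Real.exp_zero, mul_one]
      _ = N * ((m:ℝ)+1) := by ring
  · -- part (ii)
    rw [hmean, hZ]
    have hND : (0:ℝ) < N + D := by linarith
    have hLHS : 1 - 2*((m:ℝ)+1)*Real.exp (3*lam/2)
        / (Real.exp (lam*(m:ℝ)/2) + ((m:ℝ)+1)*Real.exp (3*lam/2))
        = (1 - 4*c)/(1 + 4*c) := by
      rw [h4c, Real.exp_sub]
      have he1 : (0:ℝ) < Real.exp (lam*(m:ℝ)/2) := Real.exp_pos _
      have he2 : (0:ℝ) < Real.exp (3*lam/2) := Real.exp_pos _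
      have hd1 : Real.exp (lam*(m:ℝ)/2) + ((m:ℝ)+1)*Real.exp (3*lam/2) ≠ 0 := by positivity
      field_simp
      ring
    rw [hLHS, div_le_div_iff₀ (by positivity) hND]
    nlinarith [hDN]
end
end

section
/- Let m ≥ 2 be an integer, λ > 0 a real with ω := λ·m ≥ 2, and consider the complete graph K_m on m vertices. For each edge (s,t) of K_m, let G^{st} be K_m with edge (s,t) removed, and let θ^{st} be the parameter vector with entries λ on every edge of G^{st} and 0 elsewhere. Then for all distinct edges (s,t) ≠ (u,v) of K_m, the symmetrized Kullback–Leibler divergence satisfies S(θ^{st}‖θ^{uv}) ≤ 16 ω exp(5λ/2) sinh(λ) / exp(ω/2). -/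
open scoped Classical BigOperators
open Real

noncomputable section

set_option maxHeartbeats 1000000

namespace SKLaux

variable {m : ℕ}

lemma sgn_mul_self (b : Bool) : sgn b * sgn b = 1 := by cases b <;> norm_num [sgn]

lemma sgn_mul_le_one (b c : Bool) : sgn b * sgn c ≤ 1 := by
  cases b <;> cases c <;> norm_num [sgn]

lemma neg_one_le_sgn_mul (b c : Bool) : -1 ≤ sgn b * sgn c := by
  cases b <;> cases c <;> norm_num [sgn]

lemma sgn_mul_of_ne {b c : Bool} (h : b ≠ c) : sgn b * sgn c = -1 := by
  cases b <;> cases c <;> simp_all [sgn]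

def Sz (x : Fin m → Bool) : ℤ := ∑ a : Fin m, (if x a then 1 else -1)

lemma Sz_cast (x : Fin m → Bool) : ((Sz x : ℤ) : ℝ) = ∑ a : Fin m, sgn (x a) := by
  unfold Sz sgn
  push_cast
  exact Finset.sum_congr rfl fun a _ => by by_cases h : x a <;> simp [h]

lemma abs_Sz_le (x : Fin m → Bool) : |Sz x| ≤ (m : ℤ) := by
  calc |Sz x| ≤ ∑ a : Fin m, |if x a then (1:ℤ) else -1| :=
        Finset.abs_sum_le_sum_abs _ _
    _ = ∑ _a : Fin m, 1 := Finset.sum_congr rfl fun a _ => by by_cases h : x a <;> simp [h]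
    _ = (m : ℤ) := by simp

lemma sum_lt_pairs (g : Fin m → ℝ) :
    (∑ a : Fin m, ∑ b : Fin m, if a < b then g a * g b else 0)
      = ((∑ a : Fin m, g a) ^ 2 - ∑ a : Fin m, g a * g a) / 2 := by
  have h2 : (∑ a : Fin m, ∑ b : Fin m, if a < b then g a * g b else 0)
      = ∑ a : Fin m, ∑ b : Fin m, if b < a then g a * g b else 0 := by
    rw [Finset.sum_comm]
    refine Finset.sum_congr rfl fun a _ => Finset.sum_congr rfl fun b _ => ?_
    by_cases h : b < a <;> simp [h, mul_comm]
  have h3 : ∀ a b : Fin m, (if a < b then g a * g b else 0) + (if b < a then g a * g b else 0)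
      + (if a = b then g a * g b else 0) = g a * g b := by
    intro a b
    rcases lt_trichotomy a b with h | h | h
    · simp [h, asymm h, h.ne]
    · simp [h, lt_irrefl]
    · simp [h, asymm h, h.ne']
  have h4 : (∑ a : Fin m, ∑ b : Fin m, if a < b then g a * g b else 0)
      + (∑ a : Fin m, ∑ b : Fin m, if b < a then g a * g b else 0)
      + (∑ a : Fin m, ∑ b : Fin m, if a = b then g a * g b else 0)
      = (∑ a : Fin m, g a) ^ 2 := by
    rw [sq, Finset.sum_mul_sum]
    rw [← Finset.sum_add_distrib, ← Finset.sum_add_distrib]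
    refine Finset.sum_congr rfl fun a _ => ?_
    rw [← Finset.sum_add_distrib, ← Finset.sum_add_distrib]
    exact Finset.sum_congr rfl fun b _ => h3 a b
  have h5 : (∑ a : Fin m, ∑ b : Fin m, if a = b then g a * g b else 0)
      = ∑ a : Fin m, g a * g a := by
    refine Finset.sum_congr rfl fun a _ => ?_
    simp
  rw [← h2, h5] at h4
  linarith

def w (lam : ℝ) (x : Fin m → Bool) : ℝ := Real.exp (lam * (((Sz x : ℤ) : ℝ) ^ 2 - (m : ℝ)) / 2)

def cntT (x : Fin m → Bool) : ℕ := (Finset.univ.filter fun a => x a = true).card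

def cntF (x : Fin m → Bool) : ℕ := (Finset.univ.filter fun a => x a = false).card

def Zf (lam : ℝ) (mm : ℕ) : ℝ := ∑ x : Fin mm → Bool, w lam x

def θmiss (lam : ℝ) (s t : Fin m) : Fin m → Fin m → ℝ :=
  fun a b => if a ≠ b ∧ ¬((a = s ∧ b = t) ∨ (a = t ∧ b = s)) then lam else 0

lemma pair_sum (lam : ℝ) (s t : Fin m) (hst : s ≠ t) (g : Fin m → ℝ) :
    (∑ a : Fin m, ∑ b : Fin m,
        if a < b ∧ ((a = s ∧ b = t) ∨ (a = t ∧ b = s)) then lam * (g a * g b) else 0)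
      = lam * (g s * g t) := by
  have key : ∀ s' t' : Fin m, s' < t' → (g s' * g t' = g s * g t) →
      ((s' = s ∧ t' = t) ∨ (s' = t ∧ t' = s)) →
      (∑ a : Fin m, ∑ b : Fin m,
        if a < b ∧ ((a = s ∧ b = t) ∨ (a = t ∧ b = s)) then lam * (g a * g b) else 0)
      = lam * (g s * g t) := by
    intro s' t' hlt hgg hor
    have hcond : ∀ a b : Fin m,
        (a < b ∧ ((a = s ∧ b = t) ∨ (a = t ∧ b = s))) ↔ (a = s' ∧ b = t') := by
      intro a b
      constructor
      · rintro ⟨hab, (⟨rfl, rfl⟩ | ⟨rfl, rfl⟩)⟩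
        · rcases hor with ⟨rfl, rfl⟩ | ⟨h1, h2⟩
          · exact ⟨rfl, rfl⟩
          · exact absurd hlt (by rw [h1, h2]; exact asymm hab)
        · rcases hor with ⟨h1, h2⟩ | ⟨rfl, rfl⟩
          · exact absurd hlt (by rw [h1, h2]; exact asymm hab)
          · exact ⟨rfl, rfl⟩
      · rintro ⟨rfl, rfl⟩
        refine ⟨hlt, ?_⟩
        rcases hor with ⟨rfl, rfl⟩ | ⟨rfl, rfl⟩
        · exact Or.inl ⟨rfl, rfl⟩
        · exact Or.inr ⟨rfl, rfl⟩
    calc (∑ a : Fin m, ∑ b : Fin m,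
        if a < b ∧ ((a = s ∧ b = t) ∨ (a = t ∧ b = s)) then lam * (g a * g b) else 0)
        = ∑ a : Fin m, ∑ b : Fin m, if a = s' ∧ b = t' then lam * (g a * g b) else 0 := by
          refine Finset.sum_congr rfl fun a _ => Finset.sum_congr rfl fun b _ => ?_
          exact if_congr (hcond a b) rfl rfl
      _ = lam * (g s * g t) := by
          rw [← hgg]
          have hin : ∀ a : Fin m, (∑ b : Fin m, if a = s' ∧ b = t' then lam * (g a * g b) else 0)
              = if a = s' then lam * (g a * g t') else 0 := by
            intro a
            by_cases h : a = s' <;> simp [h]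
          simp [hin]
  rcases hst.lt_or_gt with h | h
  · exact key s t h rfl (Or.inl ⟨rfl, rfl⟩)
  · exact key t s h (mul_comm _ _) (Or.inr ⟨rfl, rfl⟩)

lemma energy_missing (lam : ℝ) (s t : Fin m) (hst : s ≠ t) (x : Fin m → Bool) :
    energy (θmiss lam s t) x
      = lam * (((Sz x : ℤ) : ℝ) ^ 2 - (m : ℝ)) / 2 - lam * (sgn (x s) * sgn (x t)) := by
  set g : Fin m → ℝ := fun a => sgn (x a) with hg
  have step1 : energy (θmiss lam s t) x
      = (∑ a : Fin m, ∑ b : Fin m, if a < b then lam * (g a * g b) else 0)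
        - (∑ a : Fin m, ∑ b : Fin m,
            if a < b ∧ ((a = s ∧ b = t) ∨ (a = t ∧ b = s)) then lam * (g a * g b) else 0) := by
    unfold energy θmiss
    rw [← Finset.sum_sub_distrib]
    refine Finset.sum_congr rfl fun a _ => ?_
    rw [← Finset.sum_sub_distrib]
    refine Finset.sum_congr rfl fun b _ => ?_
    by_cases h1 : a < b
    · by_cases h2 : (a = s ∧ b = t) ∨ (a = t ∧ b = s)
      · simp [h1, h2]
      · simp [h1, h2, h1.ne]; ring
    · simp [h1]
  have step2 : (∑ a : Fin m, ∑ b : Fin m, if a < b then lam * (g a * g b) else 0)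
      = lam * ((((Sz x : ℤ) : ℝ)) ^ 2 - (m : ℝ)) / 2 := by
    have : (∑ a : Fin m, ∑ b : Fin m, if a < b then lam * (g a * g b) else 0)
        = lam * ∑ a : Fin m, ∑ b : Fin m, if a < b then g a * g b else 0 := by
      rw [Finset.mul_sum]
      refine Finset.sum_congr rfl fun a _ => ?_
      rw [Finset.mul_sum]
      refine Finset.sum_congr rfl fun b _ => ?_
      by_cases h : a < b <;> simp [h]
    rw [this, sum_lt_pairs g]
    have hsq : (∑ a : Fin m, g a * g a) = (m : ℝ) := by
      have : ∀ a : Fin m, g a * g a = 1 := fun a => sgn_mul_self (x a)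
      simp [this]
    rw [hsq, Sz_cast]
    ring
  rw [step1, step2, pair_sum lam s t hst g]

lemma Zpart_pos (θ : Fin p → Fin p → ℝ) : 0 < Zpart θ :=
  Finset.sum_pos (fun x _ => Real.exp_pos _) Finset.univ_nonempty

lemma isingP_nonneg (θ : Fin p → Fin p → ℝ) (x : Fin p → Bool) : 0 ≤ isingP θ x :=
  div_nonneg (Real.exp_pos _).le (Zpart_pos θ).le

lemma isingP_pos (θ : Fin p → Fin p → ℝ) (x : Fin p → Bool) : 0 < isingP θ x :=
  div_pos (Real.exp_pos _) (Zpart_pos θ)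

lemma sum_isingP (θ : Fin p → Fin p → ℝ) : (∑ x : Fin p → Bool, isingP θ x) = 1 := by
  unfold isingP
  rw [← Finset.sum_div, ← Zpart]
  exact div_self (Zpart_pos θ).ne'

lemma log_isingP_ratio (θ θ' : Fin p → Fin p → ℝ) (x : Fin p → Bool) :
    Real.log (isingP θ x / isingP θ' x)
      = (energy θ x - energy θ' x) + (Real.log (Zpart θ') - Real.log (Zpart θ)) := by
  rw [Real.log_div (isingP_pos θ x).ne' (isingP_pos θ' x).ne']
  unfold isingP
  rw [Real.log_div (Real.exp_ne_zero _) (Zpart_pos θ).ne',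
      Real.log_div (Real.exp_ne_zero _) (Zpart_pos θ').ne',
      Real.log_exp, Real.log_exp]
  ring

lemma symKL_eq (θ θ' : Fin p → Fin p → ℝ) :
    symKL θ θ' = ∑ x : Fin p → Bool,
      (isingP θ x - isingP θ' x) * (energy θ x - energy θ' x) := by
  have hKL : ∀ (a b : Fin p → Fin p → ℝ), KLdiv a b
      = (∑ x : Fin p → Bool, isingP a x * (energy a x - energy b x))
        + (Real.log (Zpart b) - Real.log (Zpart a)) := by
    intro a b
    unfold KLdiv
    have : ∀ x : Fin p → Bool, isingP a x * Real.log (isingP a x / isingP b x)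
        = isingP a x * (energy a x - energy b x)
          + isingP a x * (Real.log (Zpart b) - Real.log (Zpart a)) := by
      intro x; rw [log_isingP_ratio]; ring
    rw [Finset.sum_congr rfl fun x _ => this x, Finset.sum_add_distrib,
        ← Finset.sum_mul, sum_isingP, one_mul]
  unfold symKL
  rw [hKL θ θ', hKL θ' θ]
  have expand : ∀ x : Fin p → Bool,
      (isingP θ x - isingP θ' x) * (energy θ x - energy θ' x)
      = isingP θ x * (energy θ x - energy θ' x) + isingP θ' x * (energy θ' x - energy θ x) := by
    intro x; ring
  rw [Finset.sum_congr rfl fun x _ => expand x, Finset.sum_add_distrib]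
  ring

lemma meanPar_le_one (θ : Fin p → Fin p → ℝ) (s t : Fin p) : meanPar θ s t ≤ 1 := by
  unfold meanPar
  calc (∑ x : Fin p → Bool, isingP θ x * (sgn (x s) * sgn (x t)))
      ≤ ∑ x : Fin p → Bool, isingP θ x := by
        refine Finset.sum_le_sum fun x _ => ?_
        have := sgn_mul_le_one (x s) (x t)
        nlinarith [isingP_nonneg θ x]
    _ = 1 := sum_isingP θ

lemma neg_one_le_meanPar (θ : Fin p → Fin p → ℝ) (s t : Fin p) : -1 ≤ meanPar θ s t := by
  unfold meanPar
  calc (-1 : ℝ) = -(∑ x : Fin p → Bool, isingP θ x) := by rw [sum_isingP]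
    _ ≤ ∑ x : Fin p → Bool, isingP θ x * (sgn (x s) * sgn (x t)) := by
        rw [← Finset.sum_neg_distrib]
        refine Finset.sum_le_sum fun x _ => ?_
        have := neg_one_le_sgn_mul (x s) (x t)
        nlinarith [isingP_nonneg θ x]

lemma w_pos (lam : ℝ) (x : Fin m → Bool) : 0 < w lam x := Real.exp_pos _

lemma cntT_le (x : Fin m → Bool) : cntT x ≤ m := by
  simpa [cntT] using Finset.card_filter_le Finset.univ (fun a => x a = true)

lemma cntF_le (x : Fin m → Bool) : cntF x ≤ m := by
  simpa [cntF] using Finset.card_filter_le Finset.univ (fun a => x a = false)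

lemma Sz_eq_cnt (x : Fin m → Bool) : Sz x = 2 * (cntT x : ℤ) - m := by
  unfold Sz cntT
  have : ∀ a : Fin m, (if x a then (1:ℤ) else -1) = 2 * (if x a = true then (1:ℤ) else 0) - 1 := by
    intro a; by_cases h : x a <;> simp [h]
  rw [Finset.sum_congr rfl fun a _ => this a, Finset.sum_sub_distrib, ← Finset.mul_sum,
    Finset.sum_boole]
  simp

lemma cntT_add_cntF (x : Fin m → Bool) : cntT x + cntF x = m := by
  classical
  have h := Finset.card_filter_add_card_filter_not
    (s := (Finset.univ : Finset (Fin m))) (p := fun a => x a = true)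
  simpa [cntT, cntF, Bool.not_eq_true] using h

lemma Sz_update_of_true {x : Fin m → Bool} {a : Fin m} (h : x a = true) :
    Sz (Function.update x a false) = Sz x - 2 := by
  unfold Sz
  rw [Finset.sum_eq_add_sum_sdiff_singleton_of_mem (Finset.mem_univ a)
      (f := fun c => if Function.update x a false c = true then (1:ℤ) else -1),
    Finset.sum_eq_add_sum_sdiff_singleton_of_mem (Finset.mem_univ a)
      (f := fun c => if x c = true then (1:ℤ) else -1)]
  have h1 : (∑ c ∈ Finset.univ \ {a}, if Function.update x a false c = true then (1:ℤ) else -1)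
      = ∑ c ∈ Finset.univ \ {a}, if x c = true then (1:ℤ) else -1 := by
    refine Finset.sum_congr rfl fun c hc => ?_
    have hca : c ≠ a := by
      rcases Finset.mem_sdiff.1 hc with ⟨_, hc2⟩
      simpa using hc2
    rw [Function.update_of_ne hca]
  rw [h1, Function.update_self, h]
  simp
  ring

lemma Sz_flip (x : Fin m → Bool) : Sz (fun a => !(x a)) = - Sz x := by
  unfold Sz
  rw [← Finset.sum_neg_distrib]
  refine Finset.sum_congr rfl fun a _ => ?_
  by_cases h : x a <;> simp [h]

lemma w_flip (lam : ℝ) (x : Fin m → Bool) : w lam (fun a => !(x a)) = w lam x := by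
  unfold w; rw [Sz_flip]; push_cast; ring_nf

lemma cntT_flip (x : Fin m → Bool) : cntT (fun a => !(x a)) = cntF x := by
  unfold cntT cntF
  congr 1
  ext a
  simp

lemma head_bound (lam : ℝ) (hlam : 0 < lam) :
    (∑ x : Fin m → Bool, (if 2 * Sz x ≤ 2 - (m : ℤ) then (cntT x : ℝ) else 0) * w lam x)
      ≤ (m : ℝ) * Real.exp (-(lam * m)) * Zf lam m := by
  classical
  set f : (Fin m → Bool) × Fin m → ℝ :=
    fun p => if 2 * Sz p.1 ≤ 2 - (m : ℤ) ∧ p.1 p.2 = true then w lam p.1 else 0 with hf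
  set h : (Fin m → Bool) × Fin m → ℝ :=
    fun p => if p.1 p.2 = false then w lam p.1 else 0 with hh
  set φ : (Fin m → Bool) × Fin m → (Fin m → Bool) × Fin m :=
    fun p => (Function.update p.1 p.2 (!(p.1 p.2)), p.2) with hφ
  have hinv : Function.Involutive φ := by
    intro p
    simp only [hφ]
    ext c
    · by_cases hc : c = p.2
      · subst hc; simp [Function.update_self]
      · simp [Function.update_of_ne hc]
    · rfl
  -- step 1: LHS = ∑ f
  have step1 : (∑ x : Fin m → Bool, (if 2 * Sz x ≤ 2 - (m : ℤ) then (cntT x : ℝ) else 0) * w lam x)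
      = ∑ p : (Fin m → Bool) × Fin m, f p := by
    rw [Fintype.sum_prod_type]
    refine Finset.sum_congr rfl fun x _ => ?_
    by_cases hc : 2 * Sz x ≤ 2 - (m : ℤ)
    · simp only [hf, hc, true_and, if_true]
      have hsum : (∑ a : Fin m, if x a = true then w lam x else 0) = (cntT x : ℝ) * w lam x := by
        rw [← Finset.sum_filter, Finset.sum_const, nsmul_eq_mul]
        rfl
      rw [hsum]
    · simp [hf, hc]
  -- step 2: pointwise f p ≤ exp(-(lam*m)) * h (φ p)
  have step2 : ∀ p : (Fin m → Bool) × Fin m, f p ≤ Real.exp (-(lam * m)) * h (φ p) := by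
    rintro ⟨x, a⟩
    by_cases hc : 2 * Sz x ≤ 2 - (m : ℤ) ∧ x a = true
    · obtain ⟨hc1, hc2⟩ := hc
      have hupd : φ (x, a) = (Function.update x a false, a) := by
        simp [hφ, hc2]
      have hy : (Function.update x a false) a = false := by simp
      have hSz : Sz (Function.update x a false) = Sz x - 2 := Sz_update_of_true hc2
      have hcast : 2 * ((Sz x : ℤ) : ℝ) ≤ 2 - (m : ℝ) := by exact_mod_cast hc1
      have hexp : lam * (((Sz x : ℤ) : ℝ) ^ 2 - (m : ℝ)) / 2
          ≤ -(lam * m) + lam * ((((Sz x : ℤ) : ℝ) - 2) ^ 2 - (m : ℝ)) / 2 := by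
        nlinarith [mul_nonneg hlam.le (by linarith : (0:ℝ) ≤ 2 - 2 * ((Sz x : ℤ) : ℝ) - m)]
      have : f (x, a) = w lam x := by simp [hf, hc1, hc2]
      rw [this, hupd]
      have : h (Function.update x a false, a) = w lam (Function.update x a false) := by
        simp [hh, hy]
      rw [this]
      unfold w
      rw [← Real.exp_add]
      apply Real.exp_le_exp.2
      rw [hSz]
      push_cast
      nlinarith [hexp]
    · have : f (x, a) = 0 := by simp only [hf]; rw [if_neg hc]
      rw [this]
      have hnn : 0 ≤ h (φ (x, a)) := by
        simp only [hh]
        split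
        · exact (w_pos _ _).le
        · exact le_rfl
      exact mul_nonneg (Real.exp_pos _).le hnn
  -- step 3: sum over bijection
  have hbij : Function.Bijective φ := hinv.bijective
  calc (∑ x : Fin m → Bool, (if 2 * Sz x ≤ 2 - (m : ℤ) then (cntT x : ℝ) else 0) * w lam x)
      = ∑ p : (Fin m → Bool) × Fin m, f p := step1
    _ ≤ ∑ p : (Fin m → Bool) × Fin m, Real.exp (-(lam * m)) * h (φ p) :=
        Finset.sum_le_sum fun p _ => step2 p
    _ = Real.exp (-(lam * m)) * ∑ p : (Fin m → Bool) × Fin m, h (φ p) := by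
        rw [Finset.mul_sum]
    _ = Real.exp (-(lam * m)) * ∑ p : (Fin m → Bool) × Fin m, h p := by
        rw [hbij.sum_comp h]
    _ ≤ (m : ℝ) * Real.exp (-(lam * m)) * Zf lam m := by
        have : (∑ p : (Fin m → Bool) × Fin m, h p) ≤ (m : ℝ) * Zf lam m := by
          rw [Fintype.sum_prod_type]
          unfold Zf
          rw [Finset.mul_sum]
          refine Finset.sum_le_sum fun x _ => ?_
          have hsum : (∑ a : Fin m, h (x, a)) = (cntF x : ℝ) * w lam x := by
            simp only [hh]
            rw [← Finset.sum_filter, Finset.sum_const, nsmul_eq_mul]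
            rfl
          rw [hsum]
          have h1 : (cntF x : ℝ) ≤ (m : ℝ) := by exact_mod_cast cntF_le x
          nlinarith [w_pos lam x]
        calc Real.exp (-(lam * m)) * ∑ p : (Fin m → Bool) × Fin m, h p
            ≤ Real.exp (-(lam * m)) * ((m : ℝ) * Zf lam m) :=
              mul_le_mul_of_nonneg_left this (Real.exp_pos _).le
          _ = (m : ℝ) * Real.exp (-(lam * m)) * Zf lam m := by ring

lemma headF_bound (lam : ℝ) (hlam : 0 < lam) :
    (∑ x : Fin m → Bool, (if (m : ℤ) - 2 ≤ 2 * Sz x then (cntF x : ℝ) else 0) * w lam x)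
      ≤ (m : ℝ) * Real.exp (-(lam * m)) * Zf lam m := by
  have hEq : (∑ x : Fin m → Bool, (if (m : ℤ) - 2 ≤ 2 * Sz x then (cntF x : ℝ) else 0) * w lam x)
      = ∑ x : Fin m → Bool, (if 2 * Sz x ≤ 2 - (m : ℤ) then (cntT x : ℝ) else 0) * w lam x := by
    set ν : (Fin m → Bool) ≃ (Fin m → Bool) :=
      Function.Involutive.toPerm (fun x => fun a => !(x a)) (by intro x; funext a; simp) with hν
    refine Fintype.sum_equiv ν _ _ fun x => ?_
    have h1 : Sz (ν x) = - Sz x := Sz_flip x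
    have h2 : w lam (ν x) = w lam x := w_flip lam x
    have h3 : cntT (ν x) = cntF x := cntT_flip x
    rw [h2, h3, h1]
    congr 1
    by_cases hcond : (m : ℤ) - 2 ≤ 2 * Sz x
    · rw [if_pos hcond, if_pos (by omega)]
    · rw [if_neg hcond, if_neg (by omega)]
  rw [hEq]
  exact head_bound lam hlam

lemma A_swap (lam : ℝ) (s t a b : Fin m) (hst : s ≠ t) (hab : a ≠ b) :
    (∑ x : Fin m → Bool, if x a ≠ x b then w lam x else 0)
      = ∑ x : Fin m → Bool, if x s ≠ x t then w lam x else 0 := by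
  set t₁ : Fin m := (Equiv.swap s a) t with ht₁
  have ht₁a : a ≠ t₁ := by
    intro h
    have : (Equiv.swap s a) a = (Equiv.swap s a) t₁ := by rw [← h]
    rw [ht₁, Equiv.swap_apply_self, Equiv.swap_apply_right] at this
    exact hst this
  set σ : Equiv.Perm (Fin m) := (Equiv.swap s a).trans (Equiv.swap t₁ b) with hσ
  have hσs : σ s = a := by
    simp only [hσ, Equiv.trans_apply, Equiv.swap_apply_left]
    exact Equiv.swap_apply_of_ne_of_ne ht₁a hab
  have hσt : σ t = b := by
    simp only [hσ, Equiv.trans_apply, ← ht₁, Equiv.swap_apply_left]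
  have hw : ∀ x : Fin m → Bool, w lam (fun c => x (σ c)) = w lam x := by
    intro x
    unfold w
    congr 2
    unfold Sz
    have := Equiv.sum_comp σ (fun c => if x c then (1:ℤ) else -1)
    rw [← this]
  refine Fintype.sum_equiv (Equiv.arrowCongr σ.symm (Equiv.refl Bool)) _ _ fun x => ?_
  have hform : ∀ c : Fin m, (Equiv.arrowCongr σ.symm (Equiv.refl Bool) x) c = x (σ c) := by
    intro c; simp [Equiv.arrowCongr]
  have hwx : w lam (Equiv.arrowCongr σ.symm (Equiv.refl Bool) x) = w lam x := by
    have : (Equiv.arrowCongr σ.symm (Equiv.refl Bool) x) = fun c => x (σ c) := funext hform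
    rw [this, hw]
  rw [hform s, hform t, hσs, hσt, hwx]

lemma A_count (lam : ℝ) (s t : Fin m) (hst : s ≠ t) :
    ((m : ℝ) ^ 2 - m) * (∑ x : Fin m → Bool, if x s ≠ x t then w lam x else 0)
      = ∑ x : Fin m → Bool, (((m : ℝ) ^ 2 - ((Sz x : ℤ) : ℝ) ^ 2) / 2) * w lam x := by
  set A : ℝ := ∑ x : Fin m → Bool, if x s ≠ x t then w lam x else 0 with hA
  have lhs_eq : (∑ a : Fin m, ∑ b : Fin m,
      ∑ x : Fin m → Bool, if x a ≠ x b then w lam x else 0) = ((m:ℝ)^2 - m) * A := by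
    have hab : ∀ a b : Fin m, (∑ x : Fin m → Bool, if x a ≠ x b then w lam x else 0)
        = if a = b then 0 else A := by
      intro a b
      by_cases h : a = b
      · subst h; simp
      · rw [if_neg h]; exact A_swap lam s t a b hst h
    calc (∑ a : Fin m, ∑ b : Fin m, ∑ x : Fin m → Bool, if x a ≠ x b then w lam x else 0)
        = ∑ a : Fin m, ∑ b : Fin m, if a = b then 0 else A := by
          exact Finset.sum_congr rfl fun a _ => Finset.sum_congr rfl fun b _ => hab a b
      _ = ∑ a : Fin m, ((m : ℝ) * A - A) := by
          refine Finset.sum_congr rfl fun a _ => ?_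
          have : (∑ b : Fin m, if a = b then 0 else A)
              = (∑ b : Fin m, A) - ∑ b : Fin m, if a = b then A else 0 := by
            rw [← Finset.sum_sub_distrib]
            refine Finset.sum_congr rfl fun b _ => ?_
            by_cases h : a = b <;> simp [h]
          rw [this]
          simp
      _ = ((m:ℝ)^2 - m) * A := by
          rw [Finset.sum_const]
          simp
          ring
  have rhs_eq : (∑ a : Fin m, ∑ b : Fin m,
      ∑ x : Fin m → Bool, if x a ≠ x b then w lam x else 0)
      = ∑ x : Fin m → Bool, (((m : ℝ)^2 - ((Sz x : ℤ) : ℝ)^2) / 2) * w lam x := by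
    have swap1 : (∑ a : Fin m, ∑ b : Fin m, ∑ x : Fin m → Bool, if x a ≠ x b then w lam x else 0)
        = ∑ x : Fin m → Bool, ∑ a : Fin m, ∑ b : Fin m, if x a ≠ x b then w lam x else 0 := by
      rw [Finset.sum_congr rfl fun a (_ : a ∈ Finset.univ) => Finset.sum_comm]
      exact Finset.sum_comm
    rw [swap1]
    refine Finset.sum_congr rfl fun x _ => ?_
    have hpt : ∀ a b : Fin m, (if x a ≠ x b then w lam x else 0)
        = w lam x / 2 - (sgn (x a) * sgn (x b)) * (w lam x / 2) := by
      intro a b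
      cases hxa : x a <;> cases hxb : x b <;> norm_num [sgn]
    rw [Finset.sum_congr rfl fun a (_ : a ∈ Finset.univ) =>
          Finset.sum_congr rfl fun b _ => hpt a b]
    rw [Finset.sum_congr rfl fun a (_ : a ∈ Finset.univ) => Finset.sum_sub_distrib _ _,
        Finset.sum_sub_distrib]
    have hc : (∑ _a : Fin m, ∑ _b : Fin m, w lam x / 2) = (m:ℝ)^2 * (w lam x / 2) := by
      rw [Finset.sum_const, Finset.sum_const]
      simp
      ring
    have hs : (∑ a : Fin m, ∑ b : Fin m, (sgn (x a) * sgn (x b)) * (w lam x / 2))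
        = ((Sz x : ℤ):ℝ)^2 * (w lam x / 2) := by
      have step : (∑ a : Fin m, ∑ b : Fin m, (sgn (x a) * sgn (x b)) * (w lam x / 2))
          = (∑ a : Fin m, ∑ b : Fin m, sgn (x a) * sgn (x b)) * (w lam x / 2) := by
        rw [Finset.sum_mul]
        exact Finset.sum_congr rfl fun a _ => by rw [Finset.sum_mul]
      rw [step]
      congr 1
      rw [Sz_cast, sq, Finset.sum_mul_sum]
    rw [hc, hs]
    ring
  rw [← lhs_eq]
  exact rhs_eq

lemma Zf_lower (lam : ℝ) : Real.exp (lam * ((m : ℝ) ^ 2 - m) / 2) ≤ Zf lam m := by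
  have hx : w lam (fun _ : Fin m => true) = Real.exp (lam * ((m : ℝ) ^ 2 - m) / 2) := by
    unfold w Sz
    norm_num
  rw [← hx]
  exact Finset.single_le_sum (fun x _ => (w_pos lam x).le) (Finset.mem_univ _)

lemma mid_bound (lam : ℝ) (hlam : 0 < lam) (hm : 2 ≤ m) :
    (∑ x : Fin m → Bool, (if ¬(2 * Sz x ≤ 2 - (m : ℤ)) ∧ ¬((m : ℤ) - 2 ≤ 2 * Sz x)
        then (m : ℝ) else 0) * w lam x)
      ≤ (m : ℝ) * 2 ^ m * Real.exp (lam * ((m : ℝ) ^ 2 / 4 - m) / 2) := by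
  have hpt : ∀ x : Fin m → Bool, (if ¬(2 * Sz x ≤ 2 - (m : ℤ)) ∧ ¬((m : ℤ) - 2 ≤ 2 * Sz x)
        then (m : ℝ) else 0) * w lam x
      ≤ (m : ℝ) * Real.exp (lam * ((m : ℝ) ^ 2 / 4 - m) / 2) := by
    intro x
    by_cases hc : ¬(2 * Sz x ≤ 2 - (m : ℤ)) ∧ ¬((m : ℤ) - 2 ≤ 2 * Sz x)
    · rw [if_pos hc]
      obtain ⟨hc1, hc2⟩ := hc
      push_neg at hc1 hc2
      have hsq : (2 * Sz x) ^ 2 ≤ (m : ℤ) ^ 2 := by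
        have h1 : 2 * Sz x ≤ (m : ℤ) - 3 := by omega
        have h2 : -((m : ℤ) - 3) ≤ 2 * Sz x := by omega
        have := sq_le_sq' h2 h1
        nlinarith [this, (by exact_mod_cast hm : (2:ℤ) ≤ (m:ℤ))]
      have hsqR : ((Sz x : ℤ) : ℝ) ^ 2 ≤ (m : ℝ) ^ 2 / 4 := by
        have : ((2 * Sz x : ℤ) : ℝ) ^ 2 ≤ ((m : ℤ) : ℝ) ^ 2 := by exact_mod_cast hsq
        push_cast at this
        nlinarith [this]
      have hw : w lam x ≤ Real.exp (lam * ((m : ℝ) ^ 2 / 4 - m) / 2) := by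
        unfold w
        apply Real.exp_le_exp.2
        nlinarith [hsqR, hlam.le]
      have hmpos : (0:ℝ) ≤ (m:ℝ) := by positivity
      exact mul_le_mul_of_nonneg_left hw hmpos
    · rw [if_neg hc, zero_mul]
      positivity
  calc (∑ x : Fin m → Bool, (if ¬(2 * Sz x ≤ 2 - (m : ℤ)) ∧ ¬((m : ℤ) - 2 ≤ 2 * Sz x)
        then (m : ℝ) else 0) * w lam x)
      ≤ ∑ _x : Fin m → Bool, (m : ℝ) * Real.exp (lam * ((m : ℝ) ^ 2 / 4 - m) / 2) :=
        Finset.sum_le_sum fun x _ => hpt x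
    _ = (m : ℝ) * 2 ^ m * Real.exp (lam * ((m : ℝ) ^ 2 / 4 - m) / 2) := by
        rw [Finset.sum_const, Finset.card_univ, nsmul_eq_mul]
        rw [Fintype.card_fun]
        simp
        ring

lemma num_decomp (lam : ℝ) :
    (∑ x : Fin m → Bool, (((m : ℝ) ^ 2 - ((Sz x : ℤ) : ℝ) ^ 2) / 2) * w lam x)
      ≤ (m : ℝ) * (2 * (∑ x : Fin m → Bool, (if 2 * Sz x ≤ 2 - (m : ℤ) then (cntT x : ℝ) else 0) * w lam x)
        + 2 * (∑ x : Fin m → Bool, (if (m : ℤ) - 2 ≤ 2 * Sz x then (cntF x : ℝ) else 0) * w lam x)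
        + (∑ x : Fin m → Bool, (if ¬(2 * Sz x ≤ 2 - (m : ℤ)) ∧ ¬((m : ℤ) - 2 ≤ 2 * Sz x)
            then (m : ℝ) else 0) * w lam x)) := by
  set i1 : (Fin m → Bool) → ℝ := fun x => if 2 * Sz x ≤ 2 - (m : ℤ) then (cntT x : ℝ) else 0 with hi1
  set i2 : (Fin m → Bool) → ℝ := fun x => if (m : ℤ) - 2 ≤ 2 * Sz x then (cntF x : ℝ) else 0 with hi2
  set i3 : (Fin m → Bool) → ℝ := fun x => if ¬(2 * Sz x ≤ 2 - (m : ℤ)) ∧ ¬((m : ℤ) - 2 ≤ 2 * Sz x)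
      then (m : ℝ) else 0 with hi3
  have hdecw : ∀ x : Fin m → Bool, (((m : ℝ) ^ 2 - ((Sz x : ℤ) : ℝ) ^ 2) / 2) * w lam x
      ≤ (m : ℝ) * (2 * i1 x + 2 * i2 x + i3 x) * w lam x := by
    intro x
    have hS : ((Sz x : ℤ) : ℝ) = 2 * (cntT x : ℝ) - m := by
      exact_mod_cast Sz_eq_cnt x
    have hF : (cntF x : ℝ) = (m : ℝ) - cntT x := by
      have h0 : ((cntT x : ℕ) : ℝ) + ((cntF x : ℕ) : ℝ) = (m : ℝ) := by
        exact_mod_cast cntT_add_cntF x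
      linarith
    have habs : |((Sz x : ℤ) : ℝ)| ≤ (m : ℝ) := by
      rw [← Int.cast_abs]
      exact_mod_cast abs_Sz_le x
    have hsq : ((m:ℝ)^2 - ((Sz x : ℤ) : ℝ)^2)/2 ≤ (m:ℝ) * ((m : ℝ) - |((Sz x : ℤ) : ℝ)|) := by
      have h1 : ((m:ℝ)^2 - ((Sz x : ℤ) : ℝ)^2)
          = ((m:ℝ) - |((Sz x : ℤ) : ℝ)|) * ((m:ℝ) + |((Sz x : ℤ) : ℝ)|) := by
        rw [← sq_abs (((Sz x : ℤ) : ℝ))]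
        ring
      nlinarith [abs_nonneg (((Sz x : ℤ) : ℝ))]
    have hdec : (m : ℝ) - |((Sz x : ℤ) : ℝ)| ≤ 2 * i1 x + 2 * i2 x + i3 x := by
      have hub := le_abs_self (((Sz x : ℤ) : ℝ))
      have hlb := neg_abs_le (((Sz x : ℤ) : ℝ))
      simp only [hi1, hi2, hi3]
      by_cases h1 : 2 * Sz x ≤ 2 - (m : ℤ)
      · by_cases h2 : (m : ℤ) - 2 ≤ 2 * Sz x
        · rw [if_pos h1, if_pos h2, if_neg (by tauto)]
          rw [hF]
          linarith
        · rw [if_pos h1, if_neg h2, if_neg (by tauto)]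
          linarith
      · by_cases h2 : (m : ℤ) - 2 ≤ 2 * Sz x
        · rw [if_neg h1, if_pos h2, if_neg (by tauto)]
          rw [hF]
          linarith
        · rw [if_neg h1, if_neg h2, if_pos ⟨h1, h2⟩]
          linarith
    calc (((m : ℝ) ^ 2 - ((Sz x : ℤ) : ℝ) ^ 2) / 2) * w lam x
        ≤ ((m:ℝ) * ((m : ℝ) - |((Sz x : ℤ) : ℝ)|)) * w lam x :=
          mul_le_mul_of_nonneg_right hsq (w_pos lam x).le
      _ ≤ (m : ℝ) * (2 * i1 x + 2 * i2 x + i3 x) * w lam x := by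
          refine mul_le_mul_of_nonneg_right ?_ (w_pos lam x).le
          refine mul_le_mul_of_nonneg_left hdec (by positivity)
  calc (∑ x : Fin m → Bool, (((m : ℝ) ^ 2 - ((Sz x : ℤ) : ℝ) ^ 2) / 2) * w lam x)
      ≤ ∑ x : Fin m → Bool, (m : ℝ) * (2 * i1 x + 2 * i2 x + i3 x) * w lam x :=
        Finset.sum_le_sum fun x _ => hdecw x
    _ = (m : ℝ) * (2 * (∑ x : Fin m → Bool, i1 x * w lam x)
          + 2 * (∑ x : Fin m → Bool, i2 x * w lam x)
          + (∑ x : Fin m → Bool, i3 x * w lam x)) := by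
        have hexp : ∀ x : Fin m → Bool, (m : ℝ) * (2 * i1 x + 2 * i2 x + i3 x) * w lam x
            = (m:ℝ) * 2 * (i1 x * w lam x) + (m:ℝ) * 2 * (i2 x * w lam x)
              + (m:ℝ) * (i3 x * w lam x) := fun x => by ring
        rw [Finset.sum_congr rfl fun x _ => hexp x, Finset.sum_add_distrib,
          Finset.sum_add_distrib, ← Finset.mul_sum, ← Finset.mul_sum, ← Finset.mul_sum]
        ring

lemma Zf_pos (lam : ℝ) (mm : ℕ) : 0 < Zf lam mm :=
  Finset.sum_pos (fun x _ => w_pos lam x) Finset.univ_nonempty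

lemma one_sub_meanPar_le (lam : ℝ) (hm : 2 ≤ m) (hlam : 0 < lam) (h6 : 6 ≤ lam * m)
    (s t : Fin m) (hst : s ≠ t) :
    1 - meanPar (θmiss lam s t) s t
      ≤ 8 * m * Real.exp (5 * lam / 2) * Real.sinh lam * Real.exp (-(lam * m) / 2) := by
  set θ := θmiss lam s t with hθ
  set A : ℝ := ∑ x : Fin m → Bool, if x s ≠ x t then w lam x else 0 with hA
  set Q : ℝ := ∑ x : Fin m → Bool, if x s ≠ x t then isingP θ x else 0 with hQdef
  have hmR : (2:ℝ) ≤ (m:ℝ) := by exact_mod_cast hm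
  -- step 1
  have step1 : meanPar θ s t = 1 - 2 * Q := by
    have hpoint : ∀ x : Fin m → Bool, isingP θ x * (sgn (x s) * sgn (x t))
        = isingP θ x - 2 * (if x s ≠ x t then isingP θ x else 0) := by
      intro x
      by_cases h : x s = x t
      · rw [if_neg (by simpa using h), h, sgn_mul_self]
        ring
      · rw [if_pos h, sgn_mul_of_ne h]
        ring
    unfold meanPar
    rw [Finset.sum_congr rfl fun x _ => hpoint x, Finset.sum_sub_distrib, sum_isingP,
      ← Finset.mul_sum, ← hQdef]
  -- step 2
  have step2 : Q = Real.exp lam * A / Zpart θ := by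
    have hpt : ∀ x : Fin m → Bool, (if x s ≠ x t then isingP θ x else 0)
        = (Real.exp lam * (if x s ≠ x t then w lam x else 0)) / Zpart θ := by
      intro x
      by_cases h : x s = x t
      · rw [if_neg (by simpa using h), if_neg (by simpa using h)]
        simp
      · rw [if_pos h, if_pos h]
        unfold isingP
        congr 1
        rw [energy_missing lam s t hst x, sgn_mul_of_ne h]
        unfold w
        rw [← Real.exp_add]
        exact congrArg Real.exp (by ring)
    rw [hQdef, Finset.sum_congr rfl fun x _ => hpt x, ← Finset.sum_div, ← Finset.mul_sum, ← hA]
  -- step 3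
  have step3 : Real.exp (-lam) * Zf lam m ≤ Zpart θ := by
    unfold Zpart Zf
    rw [Finset.mul_sum]
    refine Finset.sum_le_sum fun x _ => ?_
    rw [energy_missing lam s t hst x]
    have hsplit : Real.exp (lam * (((Sz x : ℤ):ℝ)^2 - (m:ℝ))/2 - lam * (sgn (x s) * sgn (x t)))
        = w lam x * Real.exp (-(lam * (sgn (x s) * sgn (x t)))) := by
      unfold w
      rw [← Real.exp_add]
      exact congrArg Real.exp (by ring)
    rw [hsplit, mul_comm (Real.exp (-lam)) (w lam x)]
    refine mul_le_mul_of_nonneg_left ?_ (w_pos lam x).le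
    apply Real.exp_le_exp.2
    nlinarith [sgn_mul_le_one (x s) (x t), hlam.le]
  -- positivity facts
  have hApos : 0 ≤ A := by
    rw [hA]
    refine Finset.sum_nonneg fun x _ => ?_
    split
    · exact (w_pos lam x).le
    · exact le_rfl
  have hZfpos : 0 < Zf lam m := Zf_pos lam m
  have hZθpos : 0 < Zpart θ := Zpart_pos θ
  -- step 4
  have step4 : Q ≤ Real.exp (2 * lam) * A / Zf lam m := by
    rw [step2]
    have hden : 0 < Real.exp (-lam) * Zf lam m := by positivity
    have h1 : Real.exp lam * A / Zpart θ ≤ Real.exp lam * A / (Real.exp (-lam) * Zf lam m) := by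
      apply div_le_div_of_nonneg_left (by positivity) hden step3
    have h2 : Real.exp lam * A / (Real.exp (-lam) * Zf lam m)
        = Real.exp (2 * lam) * A / Zf lam m := by
      rw [Real.exp_neg]
      field_simp
      rw [two_mul, Real.exp_add]
      ring
    rw [← h2]
    exact h1
  -- step 5: (m-1) * A ≤ C' * Zf
  set E3 : ℝ := Real.exp (-(3 * lam * (m:ℝ)^2) / 8) with hE3
  have step5 : ((m:ℝ) - 1) * A ≤ ((m:ℝ) * (4 * Real.exp (-(lam * m)) + 2 ^ m * E3)) * Zf lam m := by
    have hcount := A_count lam s t hst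
    have hnum := num_decomp (m := m) lam
    have hH1 := head_bound (m := m) lam hlam
    have hH2 := headF_bound (m := m) lam hlam
    have hH3 := mid_bound (m := m) lam hlam hm
    have hmid2 : (m : ℝ) * 2 ^ m * Real.exp (lam * ((m : ℝ) ^ 2 / 4 - m) / 2)
        ≤ (m:ℝ) * 2 ^ m * E3 * Zf lam m := by
      have hsplit : Real.exp (lam * ((m : ℝ) ^ 2 / 4 - m) / 2)
          = E3 * Real.exp (lam * ((m : ℝ) ^ 2 - m) / 2) := by
        rw [hE3, ← Real.exp_add]
        exact congrArg Real.exp (by ring)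
      rw [hsplit]
      have := Zf_lower (m := m) lam
      calc (m : ℝ) * 2 ^ m * (E3 * Real.exp (lam * ((m : ℝ) ^ 2 - m) / 2))
          ≤ (m : ℝ) * 2 ^ m * (E3 * Zf lam m) := by
            refine mul_le_mul_of_nonneg_left ?_ (by positivity)
            refine mul_le_mul_of_nonneg_left this (by positivity)
        _ = (m:ℝ) * 2 ^ m * E3 * Zf lam m := by ring
    have hbig : ((m:ℝ)^2 - m) * A
        ≤ (m:ℝ) * ((m:ℝ) * (4 * Real.exp (-(lam * m)) + 2 ^ m * E3) * Zf lam m) := by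
      rw [hcount]
      calc (∑ x : Fin m → Bool, (((m : ℝ) ^ 2 - ((Sz x : ℤ) : ℝ) ^ 2) / 2) * w lam x)
          ≤ (m : ℝ) * (2 * (∑ x : Fin m → Bool, (if 2 * Sz x ≤ 2 - (m : ℤ) then (cntT x : ℝ) else 0) * w lam x)
            + 2 * (∑ x : Fin m → Bool, (if (m : ℤ) - 2 ≤ 2 * Sz x then (cntF x : ℝ) else 0) * w lam x)
            + (∑ x : Fin m → Bool, (if ¬(2 * Sz x ≤ 2 - (m : ℤ)) ∧ ¬((m : ℤ) - 2 ≤ 2 * Sz x)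
                then (m : ℝ) else 0) * w lam x)) := hnum
        _ ≤ (m : ℝ) * (2 * ((m : ℝ) * Real.exp (-(lam * m)) * Zf lam m)
            + 2 * ((m : ℝ) * Real.exp (-(lam * m)) * Zf lam m)
            + (m:ℝ) * 2 ^ m * E3 * Zf lam m) := by
            refine mul_le_mul_of_nonneg_left ?_ (by positivity)
            have := le_trans hH3 hmid2
            gcongr
        _ = (m:ℝ) * ((m:ℝ) * (4 * Real.exp (-(lam * m)) + 2 ^ m * E3) * Zf lam m) := by ring
    have hmpos : (0:ℝ) < (m:ℝ) := by linarith
    have hfact : ((m:ℝ)^2 - m) * A = (m:ℝ) * (((m:ℝ) - 1) * A) := by ring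
    rw [hfact] at hbig
    exact le_of_mul_le_mul_left hbig hmpos
  -- step 6: 1 - meanPar ≤ 2 exp(2 lam) * C' / (m-1)
  have hm1pos : (0:ℝ) < (m:ℝ) - 1 := by linarith
  have step6 : 1 - meanPar θ s t
      ≤ 2 * Real.exp (2 * lam) * ((m:ℝ) * (4 * Real.exp (-(lam * m)) + 2 ^ m * E3)) / ((m:ℝ) - 1) := by
    rw [step1]
    have hAZ : A / Zf lam m ≤ ((m:ℝ) * (4 * Real.exp (-(lam * m)) + 2 ^ m * E3)) / ((m:ℝ) - 1) := by
      rw [div_le_div_iff₀ hZfpos hm1pos]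
      calc A * ((m:ℝ) - 1) = ((m:ℝ) - 1) * A := by ring
        _ ≤ ((m:ℝ) * (4 * Real.exp (-(lam * m)) + 2 ^ m * E3)) * Zf lam m := step5
    have : 1 - (1 - 2 * Q) = 2 * Q := by ring
    rw [this]
    calc 2 * Q ≤ 2 * (Real.exp (2 * lam) * A / Zf lam m) := by linarith [step4]
      _ = 2 * Real.exp (2 * lam) * (A / Zf lam m) := by ring
      _ ≤ 2 * Real.exp (2 * lam) * (((m:ℝ) * (4 * Real.exp (-(lam * m)) + 2 ^ m * E3)) / ((m:ℝ) - 1)) := by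
          refine mul_le_mul_of_nonneg_left hAZ (by positivity)
      _ = 2 * Real.exp (2 * lam) * ((m:ℝ) * (4 * Real.exp (-(lam * m)) + 2 ^ m * E3)) / ((m:ℝ) - 1) := by
          ring
  -- step 7: final arithmetic
  have hsinh : lam ≤ Real.sinh lam := (Real.self_lt_sinh_iff.2 hlam).le
  have hms : (6:ℝ) ≤ (m:ℝ) * Real.sinh lam := by
    calc (6:ℝ) ≤ lam * m := h6
      _ = (m:ℝ) * lam := by ring
      _ ≤ (m:ℝ) * Real.sinh lam := by
          refine mul_le_mul_of_nonneg_left hsinh (by positivity)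
  have he1 : Real.exp (2 * lam) ≤ Real.exp (5 * lam / 2) := by
    apply Real.exp_le_exp.2
    linarith
  have he2 : Real.exp (-(lam * m) / 2) ≤ 1 := by
    rw [← Real.exp_zero]
    apply Real.exp_le_exp.2
    nlinarith
  have hsplitexp : Real.exp (-(lam * m)) = Real.exp (-(lam * m)/2) * Real.exp (-(lam * m)/2) := by
    rw [← Real.exp_add]
    exact congrArg Real.exp (by ring)
  -- bound for the first piece
  have B1 : 16 * Real.exp (2*lam) * Real.exp (-(lam * m))
      ≤ 4 * (m:ℝ) * Real.exp (5 * lam / 2) * Real.sinh lam * Real.exp (-(lam * m) / 2) := by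
    have h1 : 4 * Real.exp (2*lam) * Real.exp (-(lam*m)/2)
        ≤ 4 * Real.exp (5*lam/2) * Real.exp (-(lam*m)/2) := by
      refine mul_le_mul_of_nonneg_right ?_ (Real.exp_pos _).le
      linarith [he1]
    have h2 : 4 * Real.exp (-(lam*m)/2) ≤ (m:ℝ) * Real.sinh lam := by
      nlinarith [he2, hms]
    calc 16 * Real.exp (2*lam) * Real.exp (-(lam * m))
        = (4 * Real.exp (2*lam) * Real.exp (-(lam*m)/2)) * (4 * Real.exp (-(lam*m)/2)) := by
          rw [hsplitexp]; ring
      _ ≤ (4 * Real.exp (5*lam/2) * Real.exp (-(lam*m)/2)) * ((m:ℝ) * Real.sinh lam) := by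
          refine mul_le_mul h1 h2 (by positivity) (by positivity)
      _ = 4 * (m:ℝ) * Real.exp (5 * lam / 2) * Real.sinh lam * Real.exp (-(lam * m) / 2) := by
          ring
  -- bound for the second piece
  have h16 : (16:ℝ) < Real.exp 3 := by
    have h1 := Real.exp_one_gt_d9
    have h2 : (2.7182818283:ℝ)^3 ≤ Real.exp 1 ^ 3 :=
      pow_le_pow_left₀ (by norm_num) h1.le 3
    have h3 : Real.exp 1 ^ 3 = Real.exp 3 := by
      rw [Real.exp_one_pow]
      norm_num
    nlinarith [h2, h3]
  have h34 : (2:ℝ) ≤ Real.exp (3/4) := by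
    by_contra hcon
    push_neg at hcon
    have h4 : Real.exp (3/4) ^ (4:ℕ) < 2 ^ (4:ℕ) :=
      pow_lt_pow_left₀ hcon (Real.exp_pos _).le (by norm_num)
    have h5 : Real.exp (3/4) ^ (4:ℕ) = Real.exp 3 := by
      rw [← Real.exp_nat_mul]
      norm_num
    rw [h5] at h4
    norm_num at h4
    linarith
  have hpow : (2:ℝ)^m ≤ Real.exp (3 * m / 4) := by
    calc (2:ℝ)^m ≤ (Real.exp (3/4))^m := pow_le_pow_left₀ (by norm_num) h34 m
      _ = Real.exp (3 * m / 4) := by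
          rw [← Real.exp_nat_mul]
          congr 1
          ring
  have hkey : Real.exp (3 * m / 4) * E3 ≤ Real.exp (-(lam * m) / 2) := by
    rw [hE3, ← Real.exp_add]
    apply Real.exp_le_exp.2
    nlinarith [mul_nonneg (by linarith : (0:ℝ) ≤ lam * m - 6) (by linarith : (0:ℝ) ≤ 3 * (m:ℝ) - 4)]
  have h2mE : (2:ℝ)^m * E3 ≤ Real.exp (-(lam * m)/2) := by
    calc (2:ℝ)^m * E3 ≤ Real.exp (3 * m / 4) * E3 :=
        mul_le_mul_of_nonneg_right hpow (Real.exp_pos _).le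
      _ ≤ Real.exp (-(lam * m)/2) := hkey
  have B2 : 4 * Real.exp (2*lam) * (2^m * E3)
      ≤ 4 * (m:ℝ) * Real.exp (5 * lam / 2) * Real.sinh lam * Real.exp (-(lam * m) / 2) := by
    have hsinpos : (0:ℝ) < (m:ℝ) * Real.sinh lam := by linarith
    calc 4 * Real.exp (2*lam) * (2^m * E3)
        ≤ 4 * Real.exp (5*lam/2) * Real.exp (-(lam*m)/2) := by
          have := mul_le_mul he1 h2mE (by positivity) (Real.exp_pos _).le
          nlinarith [this]
      _ ≤ 4 * Real.exp (5*lam/2) * Real.exp (-(lam*m)/2) * ((m:ℝ) * Real.sinh lam) := by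
          nlinarith [Real.exp_pos (5*lam/2), Real.exp_pos (-(lam*m)/2), hms,
            mul_pos (Real.exp_pos (5*lam/2)) (Real.exp_pos (-(lam*m)/2))]
      _ = 4 * (m:ℝ) * Real.exp (5 * lam / 2) * Real.sinh lam * Real.exp (-(lam * m) / 2) := by
          ring
  -- combine
  have hfrac : (m:ℝ) / ((m:ℝ) - 1) ≤ 2 := by
    rw [div_le_iff₀ hm1pos]
    linarith
  have hfinal : 2 * Real.exp (2 * lam) * ((m:ℝ) * (4 * Real.exp (-(lam * m)) + 2 ^ m * E3)) / ((m:ℝ) - 1)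
      ≤ 8 * m * Real.exp (5 * lam / 2) * Real.sinh lam * Real.exp (-(lam * m) / 2) := by
    have hstep : 2 * Real.exp (2 * lam) * ((m:ℝ) * (4 * Real.exp (-(lam * m)) + 2 ^ m * E3)) / ((m:ℝ) - 1)
        ≤ 4 * Real.exp (2 * lam) * (4 * Real.exp (-(lam * m)) + 2 ^ m * E3) := by
      rw [div_le_iff₀ hm1pos]
      have hpos : (0:ℝ) ≤ Real.exp (2*lam) * (4 * Real.exp (-(lam * m)) + 2 ^ m * E3) := by positivity
      nlinarith [hpos]
    calc 2 * Real.exp (2 * lam) * ((m:ℝ) * (4 * Real.exp (-(lam * m)) + 2 ^ m * E3)) / ((m:ℝ) - 1)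
        ≤ 4 * Real.exp (2 * lam) * (4 * Real.exp (-(lam * m)) + 2 ^ m * E3) := hstep
      _ = 16 * Real.exp (2*lam) * Real.exp (-(lam * m)) + 4 * Real.exp (2*lam) * (2^m * E3) := by
          ring
      _ ≤ 4 * (m:ℝ) * Real.exp (5 * lam / 2) * Real.sinh lam * Real.exp (-(lam * m) / 2)
          + 4 * (m:ℝ) * Real.exp (5 * lam / 2) * Real.sinh lam * Real.exp (-(lam * m) / 2) := by
          linarith [B1, B2]
      _ = 8 * m * Real.exp (5 * lam / 2) * Real.sinh lam * Real.exp (-(lam * m) / 2) := by ring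
  linarith [step6, hfinal]

end SKLaux

open SKLaux in
/-- Lemma 5 (Ensemble B for `G_{p,k}`): for the complete graph `K_m` with one edge
removed, uniform weight `λ`, `ω = λm ≥ 2`, the symmetrized KL divergence between
any two distinct models is at most `16 ω e^{5λ/2} sinh(λ) / e^{ω/2}`. -/
theorem symKL_bound_edge_ensemble (m : ℕ) (lam : ℝ)
    (hm : 2 ≤ m) (hlam : 0 < lam) (hom : 2 ≤ lam * (m : ℝ))
    (s t u v : Fin m) (hst : s ≠ t) (huv : u ≠ v)
    (hdiff : ¬((s = u ∧ t = v) ∨ (s = v ∧ t = u)))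
    (θst θuv : Fin m → Fin m → ℝ)
    (hθst : θst = fun a b =>
      if a ≠ b ∧ ¬((a = s ∧ b = t) ∨ (a = t ∧ b = s)) then lam else 0)
    (hθuv : θuv = fun a b =>
      if a ≠ b ∧ ¬((a = u ∧ b = v) ∨ (a = v ∧ b = u)) then lam else 0) :
    symKL θst θuv ≤ 16 * (lam * (m : ℝ)) * Real.exp (5 * lam / 2) *
      Real.sinh lam / Real.exp (lam * (m : ℝ) / 2) := by
  have hθst' : θst = θmiss lam s t := hθst
  have hθuv' : θuv = θmiss lam u v := hθuv
  subst hθst' hθuv'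
  set θ := θmiss lam s t with hθ
  set θ' := θmiss lam u v with hθ'
  have hmR : (2:ℝ) ≤ (m:ℝ) := by exact_mod_cast hm
  -- expansion of symKL in terms of mean parameters
  have hswap : symKL θ θ'
      = lam * meanPar θ u v - lam * meanPar θ s t
        - lam * meanPar θ' u v + lam * meanPar θ' s t := by
    rw [symKL_eq]
    have hpt : ∀ x : Fin m → Bool, (isingP θ x - isingP θ' x) * (energy θ x - energy θ' x)
        = lam * (isingP θ x * (sgn (x u) * sgn (x v)))
          - lam * (isingP θ x * (sgn (x s) * sgn (x t)))
          - lam * (isingP θ' x * (sgn (x u) * sgn (x v)))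
          + lam * (isingP θ' x * (sgn (x s) * sgn (x t))) := by
      intro x
      rw [hθ, hθ', energy_missing lam s t hst x, energy_missing lam u v huv x]
      ring
    rw [Finset.sum_congr rfl fun x _ => hpt x]
    rw [Finset.sum_add_distrib, Finset.sum_sub_distrib, Finset.sum_sub_distrib,
      ← Finset.mul_sum, ← Finset.mul_sum, ← Finset.mul_sum, ← Finset.mul_sum]
    rfl
  -- rewrite target RHS
  have hrhs : 16 * (lam * (m : ℝ)) * Real.exp (5 * lam / 2) * Real.sinh lam
        / Real.exp (lam * (m : ℝ) / 2)
      = 16 * (lam * (m : ℝ)) * Real.exp (5 * lam / 2) * Real.sinh lam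
        * Real.exp (-(lam * (m : ℝ)) / 2) := by
    have h1 : -(lam * (m:ℝ)) / 2 = -(lam * (m:ℝ) / 2) := by ring
    rw [h1, Real.exp_neg, div_eq_mul_inv]
  rw [hrhs]
  have hsinh : lam ≤ Real.sinh lam := (Real.self_lt_sinh_iff.2 hlam).le
  have hsinhpos : 0 < Real.sinh lam := lt_of_lt_of_le hlam hsinh
  have hexp1le : (1:ℝ) ≤ Real.exp (5 * lam / 2) := by
    rw [← Real.exp_zero]
    apply Real.exp_le_exp.2
    linarith
  rcases le_total (lam * (m:ℝ)) 6 with hcase | hcase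
  · -- small ω: trivial bound symKL ≤ 4 lam
    have htriv : symKL θ θ' ≤ 4 * lam := by
      rw [hswap]
      have b1 := mul_le_mul_of_nonneg_left (meanPar_le_one θ u v) hlam.le
      have b2 := mul_le_mul_of_nonneg_left (neg_one_le_meanPar θ s t) hlam.le
      have b3 := mul_le_mul_of_nonneg_left (neg_one_le_meanPar θ' u v) hlam.le
      have b4 := mul_le_mul_of_nonneg_left (meanPar_le_one θ' s t) hlam.le
      linarith
    -- convexity: exp(ω/2) ≤ 4 ω for ω ∈ [2,6]
    have hconvex : Real.exp (lam * (m:ℝ) / 2) ≤ 4 * (lam * (m:ℝ)) := by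
      set om := lam * (m:ℝ) with hom'
      have ha : (0:ℝ) ≤ (6 - om) / 4 := by linarith
      have hb : (0:ℝ) ≤ (om - 2) / 4 := by linarith
      have hab : (6 - om) / 4 + (om - 2) / 4 = 1 := by ring
      have hconv := convexOn_exp.2 (Set.mem_univ (1:ℝ)) (Set.mem_univ (3:ℝ)) ha hb hab
      simp only [smul_eq_mul] at hconv
      have harg : (6 - om) / 4 * 1 + (om - 2) / 4 * 3 = om / 2 := by ring
      rw [harg] at hconv
      have he1 : Real.exp 1 < 2.7182818286 := Real.exp_one_lt_d9
      have he3 : Real.exp 3 < 20.086 := by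
        have h2 : Real.exp 1 ^ 3 ≤ (2.7182818286:ℝ) ^ 3 :=
          pow_le_pow_left₀ (Real.exp_pos 1).le he1.le 3
        have h3 : Real.exp 1 ^ 3 = Real.exp 3 := by
          rw [Real.exp_one_pow]; norm_num
        nlinarith [h2, h3]
      nlinarith [hconv, mul_nonneg ha (Real.exp_pos 1).le, mul_nonneg hb (Real.exp_pos 3).le,
        mul_nonneg ha (by linarith : (0:ℝ) ≤ 2.7182818286 - Real.exp 1),
        mul_nonneg hb (by linarith : (0:ℝ) ≤ 20.086 - Real.exp 3)]
    have hexpneg : Real.exp (-(lam * (m:ℝ)) / 2) = (Real.exp (lam * (m:ℝ) / 2))⁻¹ := by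
      rw [← Real.exp_neg]
      exact congrArg Real.exp (by ring)
    have hfinal : 4 * lam ≤ 16 * (lam * (m : ℝ)) * Real.exp (5 * lam / 2) * Real.sinh lam
        * Real.exp (-(lam * (m : ℝ)) / 2) := by
      rw [hexpneg, ← div_eq_mul_inv, le_div_iff₀ (Real.exp_pos _)]
      have h1 : 4 * lam * Real.exp (lam * (m:ℝ) / 2) ≤ 4 * lam * (4 * (lam * (m:ℝ))) :=
        mul_le_mul_of_nonneg_left hconvex (by positivity)
      have h2 : 16 * lam * (lam * (m:ℝ)) ≤ 16 * (lam * (m:ℝ)) * Real.sinh lam := by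
        nlinarith [hsinh, hom]
      have h3 : 16 * (lam * (m:ℝ)) * Real.sinh lam
          ≤ 16 * (lam * (m:ℝ)) * Real.exp (5 * lam / 2) * Real.sinh lam := by
        have hnn : (0:ℝ) ≤ 16 * (lam * (m:ℝ)) * Real.sinh lam := by positivity
        nlinarith [mul_le_mul_of_nonneg_left hexp1le hnn]
      linarith
    linarith
  · -- large ω: use the missing-edge bound
    have hB1 := one_sub_meanPar_le lam hm hlam hcase s t hst
    have hB2 := one_sub_meanPar_le lam hm hlam hcase u v huv
    have hub : symKL θ θ' ≤ lam * ((1 - meanPar θ s t) + (1 - meanPar θ' u v)) := by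
      rw [hswap]
      have b1 := mul_le_mul_of_nonneg_left (meanPar_le_one θ u v) hlam.le
      have b4 := mul_le_mul_of_nonneg_left (meanPar_le_one θ' s t) hlam.le
      nlinarith [hlam.le]
    have hsum : (1 - meanPar θ s t) + (1 - meanPar θ' u v)
        ≤ 16 * m * Real.exp (5 * lam / 2) * Real.sinh lam * Real.exp (-(lam * m) / 2) := by
      rw [hθ, hθ']
      linarith [hB1, hB2]
    calc symKL θ θ' ≤ lam * ((1 - meanPar θ s t) + (1 - meanPar θ' u v)) := hub
      _ ≤ lam * (16 * m * Real.exp (5 * lam / 2) * Real.sinh lam * Real.exp (-(lam * m) / 2)) :=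
          mul_le_mul_of_nonneg_left hsum hlam.le
      _ = 16 * (lam * (m : ℝ)) * Real.exp (5 * lam / 2) * Real.sinh lam
          * Real.exp (-(lam * (m : ℝ)) / 2) := by ring
end
end
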